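/- arXiv:math/0107205 — 3 statements merged into one kernel-verified Lean document; each statement's English description precedes it below -/
import Mathlib

section
/- Let T be a strongly continuous semigroup on a complex Banach space X with generator A such that iℝ ⊂ ρ(A) and s ↦ ‖R(is)‖ is bounded on ℝ. Then for every τ > 0, x ∈ X and x* ∈ X*, the identity ř₀(t − τ, T_τ x, x*) = ř₀(t, x, x*) − ⟨x*, T_t x⟩ χ_{[0,τ]}(t) holds in the sense of tempered distributions in t; that is, ⟨ř₀(· − τ, T_τ x, x*), Φ⟩ = ⟨ř₀(·, x, x*), Φ⟩ − ∫_0^τ ⟨x*, T_r x⟩Φ(r)dr for every Schwartz function Φ. -/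
open MeasureTheory Complex Filter Topology Set
open scoped ENNReal NNReal Real

noncomputable section

/-- A strongly continuous (C₀-) semigroup of bounded linear operators on `X`. -/
structure C0Semigroup (X : Type*) [NormedAddCommGroup X] [NormedSpace ℂ X] where
  T : ℝ → X →L[ℂ] X
  T_zero : T 0 = 1
  T_add : ∀ s t : ℝ, 0 ≤ s → 0 ≤ t → T (s + t) = (T s).comp (T t)
  T_cont : ∀ x : X, ContinuousOn (fun t : ℝ => T t x) (Set.Ici (0 : ℝ))

variable {X : Type*} [NormedAddCommGroup X] [NormedSpace ℂ X]

/-- `A` (a partially defined linear operator) is the infinitesimal generator of `S`. -/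
def C0Semigroup.IsGenerator (S : C0Semigroup X) (A : X →ₗ.[ℂ] X) : Prop :=
  (∀ x : X, x ∈ A.domain ↔
    ∃ y : X, Filter.Tendsto (fun t : ℝ => t⁻¹ • (S.T t x - x)) (nhdsWithin 0 (Set.Ioi 0)) (nhds y)) ∧
  ∀ x : A.domain, Filter.Tendsto (fun t : ℝ => t⁻¹ • (S.T t (x : X) - (x : X)))
    (nhdsWithin 0 (Set.Ioi 0)) (nhds (A x))

/-- The growth bound `ω₀(T)` of a semigroup. -/
def C0Semigroup.growthBound (S : C0Semigroup X) : ℝ :=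
  sInf {ω : ℝ | ∃ M : ℝ, ∀ t : ℝ, 0 ≤ t → ‖S.T t‖ ≤ M * Real.exp (ω * t)}

/-- `R` is the resolvent `(lam - A)⁻¹` of `A` at `lam`; in particular `lam ∈ ρ(A)`. -/
def IsResolventAt (A : X →ₗ.[ℂ] X) (lam : ℂ) (R : X →L[ℂ] X) : Prop :=
  (∀ y : X, ∃ h : R y ∈ A.domain, lam • R y - A ⟨R y, h⟩ = y) ∧
  ∀ x : A.domain, R (lam • (x : X) - A x) = x

/-- `S` is hyperbolic with splitting projection `P`. -/
def C0Semigroup.IsHyperbolicWith (S : C0Semigroup X) (P : X →L[ℂ] X) : Prop :=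
  (∀ x : X, P (P x) = P x) ∧
  (∀ t : ℝ, 0 < t → ∀ x : X, P (S.T t x) = S.T t (P x)) ∧
  (∀ t : ℝ, 0 < t → ∀ x : X, P x = 0 → S.T t x = 0 → x = 0) ∧
  ∃ K ω : ℝ, 0 < K ∧ 0 < ω ∧
    (∀ t : ℝ, 0 < t → ∀ x : X, ‖S.T t (P x)‖ ≤ K * Real.exp (-ω * t) * ‖P x‖) ∧
    (∀ t : ℝ, 0 < t → ∀ x : X, P x = 0 →
      ∃ z : X, P z = 0 ∧ S.T t z = x ∧ K * Real.exp (ω * (-t)) * ‖x‖ ≤ ‖z‖)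

/-- `S` is hyperbolic. -/
def C0Semigroup.IsHyperbolic (S : C0Semigroup X) : Prop :=
  ∃ P : X →L[ℂ] X, S.IsHyperbolicWith P

/-- Fourier transform `f̂(t) = ∫ f(s) e^{-ist} ds` of a vector-valued function. -/
def fourierI (f : ℝ → X) (t : ℝ) : X :=
  ∫ s : ℝ, Complex.exp (-(Complex.I * (s : ℂ) * (t : ℂ))) • f s

/-- Inverse Fourier transform `fˇ(t) = (2π)⁻¹ ∫ f(s) e^{ist} ds`. -/
def fourierInvI (f : ℝ → X) (t : ℝ) : X :=
  (2 * Real.pi)⁻¹ • ∫ s : ℝ, Complex.exp (Complex.I * (s : ℂ) * (t : ℂ)) • f s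

/-- The Fourier multiplier operator `f ↦ (m f̂)ˇ` with operator-valued symbol `m`. -/
def mulOp (m : ℝ → X →L[ℂ] X) (f : ℝ → X) : ℝ → X :=
  fun t => fourierInvI (fun s => m s (fourierI f s)) t

/-- `m` is a Fourier multiplier on `L_p(ℝ; X)`: the associated multiplier operator is
bounded on the (dense) subspace of `X`-valued Schwartz functions. -/
def IsLpMultiplier (m : ℝ → X →L[ℂ] X) (p : ℝ≥0∞) : Prop :=
  ∃ C : ℝ, 0 ≤ C ∧ ∀ f : SchwartzMap ℝ X,
    eLpNorm (mulOp m (fun s => f s)) p volume ≤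
      ENNReal.ofReal C * eLpNorm (fun s => f s) p volume

/-- The weak-`L₁` quasinorm `sup_{σ>0} σ · mes{s : ‖f s‖ ≥ σ}`. -/
def weakL1Norm (f : ℝ → X) : ℝ≥0∞ :=
  ⨆ σ : ℝ≥0, (σ : ℝ≥0∞) * volume {s : ℝ | (σ : ℝ) ≤ ‖f s‖}

/-- The Cesàro (C,1) integral over `ℝ`:
`(C,1)∫ g = lim_{N→∞} N⁻¹ ∫_0^N ∫_{-l}^{l} g(s) ds dl`. -/
def HasCesaroIntegral (g : ℝ → X) (L : X) : Prop :=
  Filter.Tendsto (fun N : ℝ => N⁻¹ • ∫ l in (0:ℝ)..N, ∫ s in (-l)..l, g s)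
    Filter.atTop (nhds L)

/-- The Cesàro (C,1) sum over `ℤ`: `lim_N ∑_{|k|≤N} (1-|k|/N) a k`. -/
def HasCesaroSum (a : ℤ → X) (L : X) : Prop :=
  Filter.Tendsto
    (fun N : ℕ => ∑ k ∈ Finset.Icc (-(N:ℤ)) (N:ℤ), (1 - (k.natAbs : ℝ) / (N : ℝ)) • a k)
    Filter.atTop (nhds L)

/-- The closed sector with vertex `-1` and half-angle `θ` generated by the contour `γ`. -/
def sectorSet (θ : ℝ) : Set ℂ := {μ : ℂ | |Complex.arg (μ + 1)| ≤ θ}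

/-- The contour integral `(2πi)⁻¹ ∫_γ μ^{-α} R(μ+ω) x dμ` defining the fractional power
`A_ω^{-α}`, with `γ` the two rays `-1 ± t e^{iθ}`, `t ≥ 0`, traversed upwards. -/
def fracPowInt (R : ℂ → X →L[ℂ] X) (ω α θ : ℝ) (x : X) : X :=
  (2 * (Real.pi : ℂ) * Complex.I)⁻¹ • (Complex.exp ((θ : ℂ) * Complex.I) •
    ((∫ t in Set.Ioi (0:ℝ),
        ((-1 + (t : ℂ) * Complex.exp ((θ : ℂ) * Complex.I)) ^ (-(α : ℂ))) •
          R ((-1 + (t : ℂ) * Complex.exp ((θ : ℂ) * Complex.I)) + (ω : ℂ)) x) +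
     (∫ t in Set.Ioi (0:ℝ),
        ((-1 - (t : ℂ) * Complex.exp ((θ : ℂ) * Complex.I)) ^ (-(α : ℂ))) •
          R ((-1 - (t : ℂ) * Complex.exp ((θ : ℂ) * Complex.I)) + (ω : ℂ)) x)))

/-- `W` realizes the fractional power `A_ω^{-α} = (1/2πi)∫_γ μ^{-α}R(μ+ω)dμ` of the
generator `A` of `S` (with resolvent `R`); so `X_α = Rg W` with `‖W y‖_α = ‖y‖`. -/
structure IsFracPowData (S : C0Semigroup X) (A : X →ₗ.[ℂ] X) (R : ℂ → X →L[ℂ] X)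
    (α ω θ : ℝ) (W : X →L[ℂ] X) : Prop where
  halpha : 0 < α
  homega : max (S.growthBound + 3) 3 < ω
  htheta0 : 0 < θ
  htheta1 : θ < Real.pi / 6
  hsector : ∃ C : ℝ, ∀ μ ∈ sectorSet θ,
    IsResolventAt A (μ + (ω : ℂ)) (R (μ + (ω : ℂ))) ∧
    ‖R (μ + (ω : ℂ))‖ ≤ C / (1 + ‖μ‖)
  hW : ∀ x : X, W x = fracPowInt R ω α θ x

/-- For `α ≥ 0`: `W` realizes `A_ω^{-α}`, i.e. `X_α = Rg W` with `‖W y‖_α = ‖y‖`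
(`W = id` and `X₀ = X` when `α = 0`). -/
def IsAlphaData (S : C0Semigroup X) (A : X →ₗ.[ℂ] X) (R : ℂ → X →L[ℂ] X)
    (α : ℝ) (W : X →L[ℂ] X) : Prop :=
  (α = 0 ∧ W = ContinuousLinearMap.id ℂ X) ∨ ∃ ω θ : ℝ, IsFracPowData S A R α ω θ W

/-- The abscissa `s_α(A) = inf{s : sup_{Re λ > s} ‖R(λ)‖/(1+|Im λ|^α) < ∞}`. -/
def sAbscissa (A : X →ₗ.[ℂ] X) (α : ℝ) : ℝ :=
  sInf {s : ℝ | ∃ C : ℝ, ∀ lam : ℂ, s < lam.re →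
    ∃ Rl : X →L[ℂ] X, IsResolventAt A lam Rl ∧ ‖Rl‖ ≤ C * (1 + |lam.im| ^ α)}

/-- The fractional growth bound `ω_α(T)`, computed through `W` with `Rg W = X_α`,
`‖W y‖_α = ‖y‖`. -/
def fracGrowthBound (S : C0Semigroup X) (W : X →L[ℂ] X) : ℝ :=
  sInf {ω : ℝ | ∃ M : ℝ, 0 < M ∧ ∀ y : X, ∀ t : ℝ, 0 ≤ t →
    ‖S.T t (W y)‖ ≤ M * Real.exp (ω * t) * ‖y‖}

/-- A rearrangement invariant quasi-Banach function lattice on `ℝ`, described through its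
quasinorm acting on `ℝ≥0∞`-valued "absolute values" of functions. -/
structure RIQuasiLattice : Type where
  N : (ℝ → ℝ≥0∞) → ℝ≥0∞
  mono : ∀ ⦃f g : ℝ → ℝ≥0∞⦄, (∀ s, f s ≤ g s) → N f ≤ N g
  smul : ∀ (c : ℝ≥0∞) (f : ℝ → ℝ≥0∞), N (fun s => c * f s) = c * N f
  quasi : ∃ κ : ℝ≥0∞, κ < ⊤ ∧ ∀ f g : ℝ → ℝ≥0∞, N (fun s => f s + g s) ≤ κ * (N f + N g)
  rearr : ∀ f g : ℝ → ℝ≥0∞,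
    (∀ t : ℝ≥0∞, volume {s : ℝ | t < f s} = volume {s : ℝ | t < g s}) → N f = N g
  ind_pos : 0 < N (Set.indicator (Set.Icc (0:ℝ) 1) fun _ => 1)
  ind_fin : N (Set.indicator (Set.Icc (0:ℝ) 1) fun _ => 1) < ⊤

/-- A quasi-normed function lattice on the circle `𝕋 = ℝ/2πℤ` (functions on `[0,2π)`). -/
structure CircleQuasiLattice : Type where
  N : (ℝ → ℝ≥0∞) → ℝ≥0∞
  mono : ∀ ⦃f g : ℝ → ℝ≥0∞⦄, (∀ s, f s ≤ g s) → N f ≤ N g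
  smul : ∀ (c : ℝ≥0∞) (f : ℝ → ℝ≥0∞), N (fun s => c * f s) = c * N f
  quasi : ∃ κ : ℝ≥0∞, κ < ⊤ ∧ ∀ f g : ℝ → ℝ≥0∞, N (fun s => f s + g s) ≤ κ * (N f + N g)
  ind_pos : 0 < N (Set.indicator (Set.Icc (0:ℝ) 1) fun _ => 1)
  ind_fin : N (Set.indicator (Set.Icc (0:ℝ) 1) fun _ => 1) < ⊤

/-- `S` is strongly α-hyperbolic with splitting projection `P` (where `Rg W = X_α` and
`‖W y‖_α = ‖y‖`). -/
def IsStrongAlphaHyperbolicWith (S : C0Semigroup X) (W : X →L[ℂ] X) (P : X →L[ℂ] X) : Prop :=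
  (∀ x : X, P (P x) = P x) ∧
  (∀ t : ℝ, 0 ≤ t → ∀ x : X, P (S.T t x) = S.T t (P x)) ∧
  (∃ M ε : ℝ, 0 < M ∧ 0 < ε ∧ ∀ y : X, P (W y) = W y → ∀ t : ℝ, 0 ≤ t →
      ‖S.T t (W y)‖ ≤ M * Real.exp (-ε * t) * ‖y‖) ∧
  (∀ t : ℝ, 0 ≤ t → ∀ x : X, P x = 0 → ∃! z : X, P z = 0 ∧ S.T t z = x) ∧
  (∃ M ε : ℝ, 0 < M ∧ 0 < ε ∧ ∀ y : X, P (W y) = 0 → ∀ t : ℝ, 0 ≤ t →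
      ∀ z : X, P z = 0 → S.T t z = W y → ‖z‖ ≤ M * Real.exp (-ε * t) * ‖y‖)



section Helpers

variable {X : Type*} [NormedAddCommGroup X] [NormedSpace ℂ X]

lemma C0_tendsto_comm (S : C0Semigroup X) (A : X →ₗ.[ℂ] X) (hGen : S.IsGenerator A)
    {t : ℝ} (ht : 0 ≤ t) (y : A.domain) :
    Filter.Tendsto (fun h : ℝ => h⁻¹ • (S.T h (S.T t (y : X)) - S.T t (y : X)))
      (nhdsWithin 0 (Set.Ioi 0)) (nhds (S.T t (A y))) := by
  have comp := ((S.T t).continuous.tendsto (A y)).comp (hGen.2 y)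
  refine comp.congr' ?_
  filter_upwards [self_mem_nhdsWithin] with h hh
  have hh' : (0:ℝ) ≤ h := le_of_lt hh
  have e1 : S.T h (S.T t (y : X)) = S.T t (S.T h (y : X)) := by
    rw [← ContinuousLinearMap.comp_apply, ← S.T_add h t hh' ht, ← ContinuousLinearMap.comp_apply,
      ← S.T_add t h ht hh', add_comm]
  simp only [Function.comp_apply, e1, ← map_sub, ← ContinuousLinearMap.map_smul_of_tower]

lemma C0_mem_domain (S : C0Semigroup X) (A : X →ₗ.[ℂ] X) (hGen : S.IsGenerator A)
    {t : ℝ} (ht : 0 ≤ t) (y : A.domain) :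
    ∃ hm : S.T t (y : X) ∈ A.domain, A ⟨S.T t (y : X), hm⟩ = S.T t (A y) := by
  have key := C0_tendsto_comm S A hGen ht y
  have hm : S.T t (y : X) ∈ A.domain := (hGen.1 _).2 ⟨_, key⟩
  exact ⟨hm, tendsto_nhds_unique (hGen.2 ⟨S.T t (y : X), hm⟩) key⟩

lemma C0_resolvent_comm (S : C0Semigroup X) (A : X →ₗ.[ℂ] X) (hGen : S.IsGenerator A)
    {lam : ℂ} {Rs : X →L[ℂ] X} (hRs : IsResolventAt A lam Rs)
    {t : ℝ} (ht : 0 ≤ t) (x : X) :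
    S.T t (Rs x) = Rs (S.T t x) := by
  obtain ⟨hy, hAy⟩ := (hRs.1 x)
  set y : A.domain := ⟨Rs x, hy⟩ with hy_def
  obtain ⟨hm, hval⟩ := C0_mem_domain S A hGen ht y
  have h2 := hRs.2 ⟨S.T t (Rs x), hm⟩
  have e : lam • S.T t (Rs x) - A ⟨S.T t (Rs x), hm⟩ = S.T t x := by
    rw [hval, ← (S.T t).map_smul, ← map_sub]
    exact congrArg _ hAy
  rw [← e]
  exact h2.symm

lemma C0_hasDerivWithinAt (S : C0Semigroup X) (A : X →ₗ.[ℂ] X) (hGen : S.IsGenerator A)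
    {t : ℝ} (ht : 0 ≤ t) (y : A.domain) :
    HasDerivWithinAt (fun r : ℝ => S.T r (y : X)) (S.T t (A y)) (Set.Ioi t) t := by
  rw [hasDerivWithinAt_iff_tendsto_slope]
  have hmap : Filter.Tendsto (fun r : ℝ => r - t) (nhdsWithin t (Set.Ioi t \ {t}))
      (nhdsWithin 0 (Set.Ioi 0)) := by
    apply tendsto_nhdsWithin_of_tendsto_nhds_of_eventually_within
    · have : Filter.Tendsto (fun r : ℝ => r - t) (nhds t) (nhds (t - t)) :=
        (continuous_id.sub continuous_const).tendsto t
      rw [sub_self] at this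
      exact this.mono_left nhdsWithin_le_nhds
    · filter_upwards [self_mem_nhdsWithin] with r hr
      exact sub_pos.2 (Set.mem_Ioi.1 hr.1)
  have comp := (C0_tendsto_comm S A hGen ht y).comp hmap
  refine comp.congr' ?_
  filter_upwards [self_mem_nhdsWithin] with r hr
  have hrt : t < r := hr.1
  have hrt' : (0:ℝ) ≤ r - t := by linarith
  have e1 : S.T r (y : X) = S.T t (S.T (r - t) (y : X)) := by
    rw [← ContinuousLinearMap.comp_apply, ← S.T_add t (r - t) ht hrt']
    congr 1
    ring
  have e2 : S.T (r - t) (S.T t (y : X)) = S.T t (S.T (r - t) (y : X)) := by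
    rw [← ContinuousLinearMap.comp_apply, ← S.T_add (r - t) t hrt' ht,
      ← ContinuousLinearMap.comp_apply, ← S.T_add t (r - t) ht hrt', add_comm]
  simp only [Function.comp_apply, slope_def_module, e1, e2]


set_option maxHeartbeats 1000000 in
open scoped FourierTransform in
lemma phi_rep (Φ : SchwartzMap ℝ ℂ) (s : ℝ) :
    fourierInvI (fun u => Φ u) s
      = (2 * Real.pi)⁻¹ • (𝓕 (fun u : ℝ => Φ u)) (-(2 * Real.pi)⁻¹ * s) := by
  have hπ : (2 * Real.pi) ≠ 0 := by positivity
  rw [fourierInvI, Real.fourier_real_eq_integral_exp_smul]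
  congr 1
  refine integral_congr_ae (Filter.Eventually.of_forall fun v => ?_)
  have h1 : -2 * Real.pi * v * (-(2 * Real.pi)⁻¹ * s) = v * s := by
    field_simp
  have h2 : Complex.I * (v : ℂ) * (s : ℂ)
      = ((-2 * Real.pi * v * (-(2 * Real.pi)⁻¹ * s) : ℝ) : ℂ) * Complex.I := by
    rw [h1]; push_cast; ring
  show Complex.exp (Complex.I * (v : ℂ) * (s : ℂ)) • Φ v = _
  rw [h2]

set_option maxHeartbeats 1000000 in
open scoped FourierTransform in
lemma phi_inversion (Φ : SchwartzMap ℝ ℂ) (r : ℝ) :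
    ∫ s : ℝ, Complex.exp (-(Complex.I * (s : ℂ) * (r : ℂ))) * fourierInvI (fun u => Φ u) s
      = Φ r := by
  have hπ : (0:ℝ) < 2 * Real.pi := by positivity
  set G : ℝ → ℂ := 𝓕 (fun u : ℝ => Φ u) with hG
  have hGS : G = ⇑(SchwartzMap.fourierTransformCLM ℂ Φ) := by
    rw [hG, SchwartzMap.fourierTransformCLM_apply]; rfl
  have hGint : Integrable G := by rw [hGS]; exact (SchwartzMap.fourierTransformCLM ℂ Φ).integrable
  set H : ℝ → ℂ := fun w => Complex.exp ((↑(2 * Real.pi * (w * r)) : ℂ) * Complex.I) * G w with hH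
  have key : ∀ s : ℝ, Complex.exp (-(Complex.I * (s : ℂ) * (r : ℂ))) * fourierInvI (fun u => Φ u) s
      = (2 * Real.pi)⁻¹ • H (-(2 * Real.pi)⁻¹ * s) := by
    intro s
    rw [phi_rep Φ s]
    simp only [hH]
    have h2 : 2 * Real.pi * (-(2 * Real.pi)⁻¹ * s * r) = -(s * r) := by
      field_simp
    have h3 : ((2 * Real.pi * (-(2 * Real.pi)⁻¹ * s * r) : ℝ) : ℂ) * Complex.I
        = -(Complex.I * (s : ℂ) * (r : ℂ)) := by
      rw [h2]; push_cast; ring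
    rw [mul_smul_comm, ← h3]
  calc ∫ s : ℝ, Complex.exp (-(Complex.I * (s : ℂ) * (r : ℂ))) * fourierInvI (fun u => Φ u) s
      = ∫ s : ℝ, (2 * Real.pi)⁻¹ • H (-(2 * Real.pi)⁻¹ * s) :=
        integral_congr_ae (Filter.Eventually.of_forall key)
    _ = (2 * Real.pi)⁻¹ • ∫ s : ℝ, H (-(2 * Real.pi)⁻¹ * s) := integral_smul _ _
    _ = (2 * Real.pi)⁻¹ • (|(-(2 * Real.pi)⁻¹)⁻¹| • ∫ w : ℝ, H w) := by
        rw [MeasureTheory.Measure.integral_comp_mul_left H (-(2 * Real.pi)⁻¹)]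
    _ = ∫ w : ℝ, H w := by
        rw [smul_smul]
        rw [show |(-(2 * Real.pi)⁻¹)⁻¹| = 2 * Real.pi by
          rw [show (-(2 * Real.pi)⁻¹)⁻¹ = -(2 * Real.pi) by rw [inv_neg, inv_inv],
            abs_neg, abs_of_pos hπ]]
        rw [inv_mul_cancel₀ (ne_of_gt hπ), one_smul]
    _ = (𝓕⁻ G) r := by
        rw [Real.fourierInv_eq']
        refine integral_congr_ae (Filter.Eventually.of_forall fun v => ?_)
        simp only [hH, smul_eq_mul, RCLike.inner_apply, starRingEnd_apply, star_trivial, mul_comm v r]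
    _ = Φ r := by
        rw [hG]
        exact MeasureTheory.Integrable.fourierInv_fourier_eq Φ.integrable hGint Φ.continuous.continuousAt


lemma resolvent_lip (A : X →ₗ.[ℂ] X) (R : ℝ → X →L[ℂ] X)
    (hR : ∀ s : ℝ, IsResolventAt A (Complex.I * (s : ℂ)) (R s))
    {C : ℝ} (hC : ∀ s : ℝ, ‖R s‖ ≤ C) (v : X) :
    Continuous fun s : ℝ => R s v := by
  have key : ∀ a b : ℝ, R a v - R b v
      = ((((b : ℂ) - (a : ℂ)) * Complex.I) • (R b (R a v)) : X) := by
    intro a b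
    obtain ⟨hmem, he⟩ := (hR a).1 v
    have h2 := (hR b).2 ⟨R a v, hmem⟩
    have e3 : (Complex.I * (b : ℂ)) • (R a v) - A ⟨R a v, hmem⟩
        = (((b : ℂ) - (a : ℂ)) * Complex.I) • R a v + v := by
      calc (Complex.I * (b : ℂ)) • (R a v) - A ⟨R a v, hmem⟩
          = (((b : ℂ) - (a : ℂ)) * Complex.I) • R a v
            + ((Complex.I * (a : ℂ)) • (R a v) - A ⟨R a v, hmem⟩) := by module
        _ = (((b : ℂ) - (a : ℂ)) * Complex.I) • R a v + v := by rw [he]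
    rw [show ((⟨R a v, hmem⟩ : A.domain) : X) = R a v from rfl, e3, map_add,
      (R b).map_smul] at h2
    exact (eq_sub_of_add_eq h2).symm
  have hC0 : 0 ≤ C := le_trans (norm_nonneg _) (hC 0)
  have lip : LipschitzWith (Real.toNNReal (C * (C * ‖v‖))) (fun s : ℝ => R s v) := by
    apply LipschitzWith.of_dist_le_mul
    intro a b
    have hnorm : ‖R a v - R b v‖ = |b - a| * ‖R b (R a v)‖ := by
      rw [key a b, norm_smul]
      congr 1
      rw [show ((b : ℂ) - (a : ℂ)) * Complex.I = ((b - a : ℝ) : ℂ) * Complex.I by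
        push_cast; ring]
      rw [norm_mul, Complex.norm_I, mul_one, Complex.norm_real, Real.norm_eq_abs]
    calc dist (R a v) (R b v) = ‖R a v - R b v‖ := dist_eq_norm _ _
      _ = |b - a| * ‖R b (R a v)‖ := hnorm
      _ ≤ |b - a| * (C * (C * ‖v‖)) := by
          refine mul_le_mul_of_nonneg_left ?_ (abs_nonneg _)
          calc ‖R b (R a v)‖ ≤ ‖R b‖ * ‖R a v‖ := (R b).le_opNorm _
            _ ≤ C * ‖R a v‖ :=
                mul_le_mul_of_nonneg_right (hC b) (norm_nonneg _)
            _ ≤ C * (C * ‖v‖) :=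
                mul_le_mul_of_nonneg_left
                  (le_trans ((R a).le_opNorm v)
                    (mul_le_mul_of_nonneg_right (hC a) (norm_nonneg _))) hC0
      _ = ↑(Real.toNNReal (C * (C * ‖v‖))) * dist a b := by
          rw [Real.coe_toNNReal _ (mul_nonneg hC0 (mul_nonneg hC0 (norm_nonneg _))),
            Real.dist_eq, abs_sub_comm]
          ring
  exact lip.continuous

set_option maxHeartbeats 1000000 in
lemma star_identity (S : C0Semigroup X) (A : X →ₗ.[ℂ] X) (hGen : S.IsGenerator A)
    (R : ℝ → X →L[ℂ] X) (hR : ∀ s : ℝ, IsResolventAt A (Complex.I * (s : ℂ)) (R s))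
    {τ : ℝ} (hτ : 0 < τ) (x : X) (xs : X →L[ℂ] ℂ) (s : ℝ) :
    (xs (R s (S.T τ x)) : ℂ) * Complex.exp (-(Complex.I * (s : ℂ) * (τ : ℂ)))
      = xs (R s x)
        - ∫ r in (0:ℝ)..τ, Complex.exp (-(Complex.I * (s : ℂ) * (r : ℂ))) * xs (S.T r x) := by
  obtain ⟨hmem, he⟩ := (hR s).1 x
  set y : A.domain := ⟨R s x, hmem⟩ with hy
  have hAy : (A y : X) = (Complex.I * (s : ℂ)) • R s x - x := by
    rw [eq_sub_iff_add_eq, ← eq_sub_iff_add_eq']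
    exact he.symm
  set g : ℝ → ℂ := fun r => Complex.exp (-(Complex.I * (s : ℂ) * (r : ℂ))) * xs (S.T r (y : X))
    with hg
  have hexpc : Continuous fun r : ℝ => Complex.exp (-(Complex.I * (s : ℂ) * (r : ℂ))) :=
    Complex.continuous_exp.comp ((continuous_const.mul Complex.continuous_ofReal).neg)
  have hTcont : ContinuousOn (fun r : ℝ => S.T r (y : X)) (Set.Ici 0) := S.T_cont _
  have hgcont : ContinuousOn g (Set.Icc 0 τ) := by
    apply ContinuousOn.mul (hexpc.continuousOn)
    exact (xs.continuous.comp_continuousOn (hTcont.mono Set.Icc_subset_Ici_self))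
  have hderiv : ∀ t ∈ Set.Ioo 0 τ, HasDerivWithinAt g
      (-(Complex.exp (-(Complex.I * (s : ℂ) * (t : ℂ))) * xs (S.T t x))) (Set.Ioi t) t := by
    intro t htt
    have h0 : HasDerivAt (fun r : ℝ => ((r : ℂ))) 1 t := by
      simpa using (hasDerivAt_id t).ofReal_comp
    have h1 : HasDerivAt (fun r : ℝ => -(Complex.I * (s : ℂ) * (r : ℂ)))
        (-(Complex.I * (s : ℂ))) t := by
      have := (h0.const_mul (Complex.I * (s : ℂ))).neg; simp only [mul_one] at this; exact this
    have hd1 : HasDerivAt (fun r : ℝ => Complex.exp (-(Complex.I * (s : ℂ) * (r : ℂ))))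
        (Complex.exp (-(Complex.I * (s : ℂ) * (t : ℂ))) * -(Complex.I * (s : ℂ))) t := h1.cexp
    have hd2v := C0_hasDerivWithinAt S A hGen (le_of_lt htt.1) y
    have hd2 : HasDerivWithinAt (fun r : ℝ => (xs (S.T r (y : X)) : ℂ))
        (xs (S.T t (A y))) (Set.Ioi t) t :=
      (xs.restrictScalars ℝ).hasFDerivAt.comp_hasDerivWithinAt t hd2v
    have hprod := hd1.hasDerivWithinAt.mul hd2
    refine hprod.congr_deriv ?_
    rw [hAy, map_sub, (S.T t).map_smul, map_sub, xs.map_smul, smul_eq_mul,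
      show ((y : A.domain) : X) = R s x from rfl]
    ring
  have hint : IntervalIntegrable
      (fun r : ℝ => -(Complex.exp (-(Complex.I * (s : ℂ) * (r : ℂ))) * xs (S.T r x)))
      volume 0 τ := by
    apply ContinuousOn.intervalIntegrable
    rw [Set.uIcc_of_le hτ.le]
    exact ((hexpc.continuousOn.mul
      (xs.continuous.comp_continuousOn ((S.T_cont x).mono Set.Icc_subset_Ici_self))).neg)
  have hFTC := intervalIntegral.integral_eq_sub_of_hasDeriv_right_of_le hτ.le hgcont hderiv hint
  have hg0 : g 0 = xs (R s x) := by
    show Complex.exp (-(Complex.I * (s : ℂ) * ((0:ℝ) : ℂ))) * xs (S.T 0 (R s x)) = xs (R s x)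
    rw [S.T_zero]
    norm_num
  have hgτ : g τ = Complex.exp (-(Complex.I * (s : ℂ) * (τ : ℂ))) * xs (R s (S.T τ x)) := by
    show Complex.exp (-(Complex.I * (s : ℂ) * (τ : ℂ))) * xs (S.T τ (R s x)) = _
    rw [C0_resolvent_comm S A hGen (hR s) hτ.le x]
  rw [intervalIntegral.integral_neg] at hFTC
  rw [hg0, hgτ] at hFTC
  linear_combination -hFTC

end Helpers




/-- Lemma 2.4/`l1`: the distributional identity
`ř₀(t-τ, T_τ x, x*) = ř₀(t, x, x*) - ⟨x*, T_t x⟩ χ_{[0,τ]}(t)`, expressed by pairing with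
an arbitrary Schwartz function `Φ`; the left-hand side pairing is
`⟨ř₀(·-τ, T_τ x, x*), Φ⟩ = ∫ ⟨x*, R(is)T_τ x⟩ e^{-isτ} Φˇ(s) ds`. -/
theorem rcheck_shift_identity
    {X : Type*} [NormedAddCommGroup X] [NormedSpace ℂ X] [CompleteSpace X]
    (S : C0Semigroup X) (A : X →ₗ.[ℂ] X) (hGen : S.IsGenerator A)
    (R : ℝ → X →L[ℂ] X) (hR : ∀ s : ℝ, IsResolventAt A (Complex.I * (s : ℂ)) (R s))
    (hRbdd : ∃ C : ℝ, ∀ s : ℝ, ‖R s‖ ≤ C) :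
    ∀ (τ : ℝ), 0 < τ → ∀ (x : X) (xs : X →L[ℂ] ℂ) (Φ : SchwartzMap ℝ ℂ),
      ∫ s : ℝ, xs (R s (S.T τ x)) * Complex.exp (-(Complex.I * (s : ℂ) * (τ : ℂ))) *
          fourierInvI (fun u => Φ u) s
        = (∫ s : ℝ, xs (R s x) * fourierInvI (fun u => Φ u) s)
          - ∫ r in (0:ℝ)..τ, xs (S.T r x) * Φ r := by
  intro τ hτ x xs Φ
  obtain ⟨C, hC⟩ := hRbdd
  set φ : ℝ → ℂ := fourierInvI (fun u => Φ u) with hφ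
  have hGS : FourierTransform.fourier (fun u : ℝ => (Φ u : ℂ))
      = ⇑(SchwartzMap.fourierTransformCLM ℂ Φ) :=
    rfl
  have hφeq : ∀ s : ℝ, φ s = (2 * Real.pi)⁻¹
      • (FourierTransform.fourier (fun u : ℝ => (Φ u : ℂ))) (-(2 * Real.pi)⁻¹ * s) := by
    intro s
    rw [hφ]
    exact phi_rep Φ s
  have hφcont : Continuous φ := by
    have hcG : Continuous (FourierTransform.fourier fun u : ℝ => (Φ u : ℂ)) := by
      rw [hGS]
      exact (SchwartzMap.fourierTransformCLM ℂ Φ).continuous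
    have h1 : Continuous fun s : ℝ => (2 * Real.pi)⁻¹
        • FourierTransform.fourier (fun u : ℝ => (Φ u : ℂ)) (-(2 * Real.pi)⁻¹ * s) :=
      by fun_prop
    exact h1.congr fun s => (hφeq s).symm
  have hφint : Integrable φ := by
    have hne : (-(2 * Real.pi)⁻¹ : ℝ) ≠ 0 :=
      neg_ne_zero.2 (inv_ne_zero (by positivity))
    have h2 : Integrable (fun s : ℝ =>
        FourierTransform.fourier (fun u : ℝ => (Φ u : ℂ)) (-(2 * Real.pi)⁻¹ * s)) := by
      apply Integrable.comp_mul_left' ?_ hne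
      rw [hGS]
      exact (SchwartzMap.fourierTransformCLM ℂ Φ).integrable
    exact (h2.smul ((2 * Real.pi)⁻¹ : ℝ)).congr
      (Filter.Eventually.of_forall fun s => (hφeq s).symm)
  have hinv : ∀ r : ℝ, ∫ s : ℝ, Complex.exp (-(Complex.I * (s : ℂ) * (r : ℂ))) * φ s = Φ r := by
    intro r
    rw [hφ]
    exact phi_inversion Φ r
  have hRT : Continuous fun s : ℝ => R s (S.T τ x) := resolvent_lip A R hR hC _
  have hRx : Continuous fun s : ℝ => R s x := resolvent_lip A R hR hC x
  have hbd : ∀ (v : X) (s : ℝ), ‖(xs (R s v) : ℂ)‖ ≤ ‖xs‖ * (C * ‖v‖) := by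
    intro v s
    calc ‖(xs (R s v) : ℂ)‖ ≤ ‖xs‖ * ‖R s v‖ := xs.le_opNorm _
      _ ≤ ‖xs‖ * (C * ‖v‖) :=
        mul_le_mul_of_nonneg_left (le_trans ((R s).le_opNorm v)
          (mul_le_mul_of_nonneg_right (hC s) (norm_nonneg v))) (norm_nonneg xs)
  have hexp1 : ∀ a b : ℝ, ‖Complex.exp (-(Complex.I * (a : ℂ) * (b : ℂ)))‖ = 1 := by
    intro a b
    rw [Complex.norm_exp]
    norm_num [Complex.mul_re]
  have hf1int : Integrable (fun s : ℝ => (xs (R s x) : ℂ) * φ s) :=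
    hφint.bdd_mul ((xs.continuous.comp hRx).aestronglyMeasurable)
      (Filter.Eventually.of_forall fun s => hbd x s)
  have hlint : Integrable (fun s : ℝ =>
      xs (R s (S.T τ x)) * Complex.exp (-(Complex.I * (s : ℂ) * (τ : ℂ))) * φ s) := by
    have hm : AEStronglyMeasurable (fun s : ℝ =>
        (xs (R s (S.T τ x)) : ℂ) * Complex.exp (-(Complex.I * (s : ℂ) * (τ : ℂ)))) volume :=
      ((xs.continuous.comp hRT).mul (Complex.continuous_exp.comp
        (((continuous_const.mul Complex.continuous_ofReal).mul
          continuous_const).neg))).aestronglyMeasurable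
    refine hφint.bdd_mul (c := ‖xs‖ * (C * ‖S.T τ x‖)) hm (Filter.Eventually.of_forall fun s => ?_)
    rw [norm_mul, hexp1 s τ, mul_one]
    exact hbd _ s
  have hstar : ∀ s : ℝ, (xs (R s (S.T τ x)) : ℂ)
        * Complex.exp (-(Complex.I * (s : ℂ) * (τ : ℂ))) * φ s
      = xs (R s x) * φ s
        - (∫ r in (0:ℝ)..τ, Complex.exp (-(Complex.I * (s : ℂ) * (r : ℂ))) * xs (S.T r x))
          * φ s := by
    intro s
    rw [star_identity S A hGen R hR hτ x xs s, sub_mul]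
  have hf2int : Integrable (fun s : ℝ =>
      (∫ r in (0:ℝ)..τ, Complex.exp (-(Complex.I * (s : ℂ) * (r : ℂ))) * xs (S.T r x))
        * φ s) := by
    have h3 := hf1int.sub hlint
    refine h3.congr (Filter.Eventually.of_forall fun s => ?_)
    simp only [Pi.sub_apply]
    rw [hstar s]
    ring
  have hswap : ∫ s : ℝ,
      (∫ r in (0:ℝ)..τ, Complex.exp (-(Complex.I * (s : ℂ) * (r : ℂ))) * xs (S.T r x)) * φ s
      = ∫ r in (0:ℝ)..τ, xs (S.T r x) * Φ r := by
    obtain ⟨Mb, hMb⟩ := (isCompact_Icc (a := (0:ℝ)) (b := τ)).exists_bound_of_continuousOn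
      (xs.continuous.comp_continuousOn ((S.T_cont x).mono Set.Icc_subset_Ici_self))
    have hprodmeas : volume.prod (volume.restrict (Set.Ioc (0:ℝ) τ))
        = ((volume : Measure ℝ).prod (volume : Measure ℝ)).restrict
            (Set.univ ×ˢ Set.Ioc (0:ℝ) τ) := by
      rw [← MeasureTheory.Measure.prod_restrict, Measure.restrict_univ]
    have hFcont : ContinuousOn (fun p : ℝ × ℝ =>
        Complex.exp (-(Complex.I * (p.1 : ℂ) * (p.2 : ℂ))) * xs (S.T p.2 x) * φ p.1)
        (Set.univ ×ˢ Set.Ici (0:ℝ)) := by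
      apply ContinuousOn.mul
      apply ContinuousOn.mul
      · exact (Complex.continuous_exp.comp
          (((continuous_const.mul (Complex.continuous_ofReal.comp continuous_fst)).mul
            (Complex.continuous_ofReal.comp continuous_snd)).neg)).continuousOn
      · exact ContinuousOn.comp (g := fun r : ℝ => (xs (S.T r x) : ℂ))
          (f := fun p : ℝ × ℝ => p.2) (t := Set.Ici 0)
          (xs.continuous.comp_continuousOn (S.T_cont x)) continuous_snd.continuousOn
          (fun p hp => hp.2)
      · exact (hφcont.comp continuous_fst).continuousOn
    have hFmeas : AEStronglyMeasurable (fun p : ℝ × ℝ =>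
        Complex.exp (-(Complex.I * (p.1 : ℂ) * (p.2 : ℂ))) * xs (S.T p.2 x) * φ p.1)
        (volume.prod (volume.restrict (Set.Ioc (0:ℝ) τ))) := by
      rw [hprodmeas]
      refine (hFcont.mono ?_).aestronglyMeasurable (MeasurableSet.univ.prod measurableSet_Ioc)
      rintro p ⟨hp1, hp2⟩
      exact ⟨hp1, le_of_lt hp2.1⟩
    have hae : ∀ᵐ p : ℝ × ℝ ∂(volume.prod (volume.restrict (Set.Ioc (0:ℝ) τ))),
        p.2 ∈ Set.Ioc (0:ℝ) τ := by
      rw [hprodmeas]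
      filter_upwards [ae_restrict_mem (MeasurableSet.univ.prod measurableSet_Ioc)] with p hp
      exact hp.2
    have hg2 : Integrable (fun _ : ℝ => (1:ℝ)) (volume.restrict (Set.Ioc (0:ℝ) τ)) :=
      integrableOn_const measure_Ioc_lt_top.ne
    have hg1 : Integrable (fun p : ℝ × ℝ => ‖φ p.1‖ * Mb)
        (volume.prod (volume.restrict (Set.Ioc (0:ℝ) τ))) := by
      have := Integrable.mul_prod (hφint.norm.mul_const Mb) hg2
      refine this.congr (Filter.Eventually.of_forall fun p => ?_)
      simp
    have hFint : Integrable (fun p : ℝ × ℝ =>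
        Complex.exp (-(Complex.I * (p.1 : ℂ) * (p.2 : ℂ))) * xs (S.T p.2 x) * φ p.1)
        (volume.prod (volume.restrict (Set.Ioc (0:ℝ) τ))) := by
      refine hg1.mono' hFmeas ?_
      filter_upwards [hae] with p hp
      rw [norm_mul, norm_mul, hexp1 p.1 p.2, one_mul]
      calc ‖(xs (S.T p.2 x) : ℂ)‖ * ‖φ p.1‖ ≤ Mb * ‖φ p.1‖ :=
            mul_le_mul_of_nonneg_right (hMb p.2 ⟨le_of_lt hp.1, hp.2⟩) (norm_nonneg _)
        _ = ‖φ p.1‖ * Mb := mul_comm _ _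
    have hswap0 := MeasureTheory.integral_integral_swap
      (μ := (volume : Measure ℝ)) (ν := volume.restrict (Set.Ioc (0:ℝ) τ))
      (f := fun s r => Complex.exp (-(Complex.I * (s : ℂ) * (r : ℂ))) * xs (S.T r x) * φ s)
      hFint
    calc ∫ s : ℝ, (∫ r in (0:ℝ)..τ,
          Complex.exp (-(Complex.I * (s : ℂ) * (r : ℂ))) * xs (S.T r x)) * φ s
        = ∫ s : ℝ, ∫ r in Set.Ioc (0:ℝ) τ,
            Complex.exp (-(Complex.I * (s : ℂ) * (r : ℂ))) * xs (S.T r x) * φ s := by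
          refine integral_congr_ae (Filter.Eventually.of_forall fun s => ?_)
          beta_reduce
          rw [intervalIntegral.integral_of_le hτ.le, ← integral_mul_const]
      _ = ∫ r in Set.Ioc (0:ℝ) τ, ∫ s : ℝ,
            Complex.exp (-(Complex.I * (s : ℂ) * (r : ℂ))) * xs (S.T r x) * φ s := hswap0
      _ = ∫ r in Set.Ioc (0:ℝ) τ, (xs (S.T r x) : ℂ) * Φ r := by
          refine integral_congr_ae (Filter.Eventually.of_forall fun r => ?_)
          calc ∫ s : ℝ, Complex.exp (-(Complex.I * (s : ℂ) * (r : ℂ))) * xs (S.T r x) * φ s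
              = ∫ s : ℝ, (xs (S.T r x) : ℂ)
                  * (Complex.exp (-(Complex.I * (s : ℂ) * (r : ℂ))) * φ s) := by
                refine integral_congr_ae (Filter.Eventually.of_forall fun s => ?_)
                ring
            _ = (xs (S.T r x) : ℂ)
                  * ∫ s : ℝ, Complex.exp (-(Complex.I * (s : ℂ) * (r : ℂ))) * φ s :=
                integral_const_mul _ _
            _ = (xs (S.T r x) : ℂ) * Φ r := by rw [hinv r]
      _ = ∫ r in (0:ℝ)..τ, (xs (S.T r x) : ℂ) * Φ r :=
          (intervalIntegral.integral_of_le hτ.le).symm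
  calc ∫ s : ℝ, (xs (R s (S.T τ x)) : ℂ)
        * Complex.exp (-(Complex.I * (s : ℂ) * (τ : ℂ))) * φ s
      = ∫ s : ℝ, ((xs (R s x) : ℂ) * φ s
          - (∫ r in (0:ℝ)..τ, Complex.exp (-(Complex.I * (s : ℂ) * (r : ℂ)))
              * xs (S.T r x)) * φ s) :=
        integral_congr_ae (Filter.Eventually.of_forall hstar)
    _ = (∫ s : ℝ, (xs (R s x) : ℂ) * φ s)
          - ∫ s : ℝ, (∫ r in (0:ℝ)..τ, Complex.exp (-(Complex.I * (s : ℂ) * (r : ℂ)))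
              * xs (S.T r x)) * φ s :=
        integral_sub hf1int hf2int
    _ = (∫ s : ℝ, (xs (R s x) : ℂ) * φ s) - ∫ r in (0:ℝ)..τ, (xs (S.T r x) : ℂ) * Φ r := by
        rw [hswap]

end
end

section
/- Let T be a strongly continuous semigroup on a complex Banach space X with generator A, and let ρ₀ > 0 be such that the strip {λ : |Re λ| < ρ₀} lies in ρ(A) and sup{‖R(is+ρ)‖ : s ∈ ℝ, |ρ| < ρ₀} < ∞. Then for every ρ with |ρ| < ρ₀ and all x ∈ X, x* ∈ X*, one has ř₀(t, x, x*) = e^{ρt} ř_ρ(t, x, x*) as tempered distributions in t; equivalently ⟨ř_ρ, Φ⟩ = ⟨ř₀, e^{−ρ·}Φ⟩ for every compactly supported Schwartz function Φ. -/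
open MeasureTheory Complex Filter Topology Set
open scoped ENNReal NNReal Real

noncomputable section

variable {X : Type*} [NormedAddCommGroup X] [NormedSpace ℂ X]

namespace RShiftAux

open MeasureTheory Complex Filter Topology Set

/-- `ψ f z = ∫ f(u) e^{uz} du`. -/
noncomputable def psi (f : ℝ → ℂ) (z : ℂ) : ℂ := ∫ u : ℝ, f u * Complex.exp (u * z)

lemma integrable_kernel {f : ℝ → ℂ} (hf : Continuous f) (hsupp : HasCompactSupport f)
    (z : ℂ) : Integrable (fun u : ℝ => f u * Complex.exp (u * z)) := by
  apply Continuous.integrable_of_hasCompactSupport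
  · exact hf.mul (Complex.continuous_exp.comp (Complex.continuous_ofReal.mul continuous_const))
  · exact hsupp.mul_right

lemma tendsto_zero_of_hasCompactSupport_atTop {g : ℝ → ℂ} (hg : HasCompactSupport g) :
    Tendsto g atTop (𝓝 0) := by
  rw [hasCompactSupport_iff_eventuallyEq, Filter.coclosedCompact_eq_cocompact] at hg
  exact hg.filter_mono _root_.atTop_le_cocompact |>.tendsto

lemma tendsto_zero_of_hasCompactSupport_atBot {g : ℝ → ℂ} (hg : HasCompactSupport g) :
    Tendsto g atBot (𝓝 0) := by
  rw [hasCompactSupport_iff_eventuallyEq, Filter.coclosedCompact_eq_cocompact] at hg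
  exact hg.filter_mono _root_.atBot_le_cocompact |>.tendsto

lemma integral_deriv_eq_zero {g g' : ℝ → ℂ} (hg : ∀ u : ℝ, HasDerivAt g (g' u) u)
    (h1 : Integrable g') (h2 : Tendsto g atTop (𝓝 0)) (h3 : Tendsto g atBot (𝓝 0)) :
    ∫ u : ℝ, g' u = 0 := by
  rw [← intervalIntegral.integral_Iic_add_Ioi (b := (0:ℝ)) h1.integrableOn h1.integrableOn,
    integral_Iic_of_hasDerivAt_of_tendsto' (fun x _ => hg x) h1.integrableOn h3,
    integral_Ioi_of_hasDerivAt_of_tendsto' (fun x _ => hg x) h1.integrableOn h2]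
  ring

lemma integral_deriv_mul_exp {f : ℝ → ℂ} (hf : ContDiff ℝ 1 f) (hsupp : HasCompactSupport f)
    (z : ℂ) : ∫ u : ℝ, deriv f u * Complex.exp (u * z) = -z * psi f z := by
  have hf' : Continuous (deriv f) := hf.continuous_deriv le_rfl
  have hexp : ∀ u : ℝ, HasDerivAt (fun v : ℝ => Complex.exp (v * z)) (Complex.exp (u * z) * z) u := by
    intro u
    have h1 : HasDerivAt (fun w : ℂ => Complex.exp (w * z)) (Complex.exp ((u:ℂ) * z) * z) (u : ℂ) := by
      simpa using ((hasDerivAt_id ((u:ℂ))).mul_const z).cexp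
    exact h1.comp_ofReal
  have hder : ∀ u : ℝ, HasDerivAt (fun v : ℝ => f v * Complex.exp (v * z))
      (deriv f u * Complex.exp (u * z) + f u * (Complex.exp (u * z) * z)) u := by
    intro u
    exact ((hf.differentiable one_ne_zero u).hasDerivAt).mul (hexp u)
  have hsupp2 : HasCompactSupport (fun v : ℝ => f v * Complex.exp (v * z)) := hsupp.mul_right
  have hI1 : Integrable (fun u : ℝ => deriv f u * Complex.exp (u * z)) :=
    integrable_kernel hf' hsupp.deriv z
  have hI2 : Integrable (fun u : ℝ => f u * (Complex.exp (u * z) * z)) := by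
    have := (integrable_kernel hf.continuous hsupp z).mul_const z
    simpa [mul_assoc] using this
  have hzero := integral_deriv_eq_zero hder (hI1.add hI2)
    (tendsto_zero_of_hasCompactSupport_atTop hsupp2)
    (tendsto_zero_of_hasCompactSupport_atBot hsupp2)
  rw [integral_add hI1 hI2] at hzero
  have h2 : ∫ u : ℝ, f u * (Complex.exp (u * z) * z) = z * psi f z := by
    rw [psi, ← integral_const_mul]
    congr 1; funext u; ring
  rw [h2] at hzero
  linear_combination hzero

lemma psi_sq {f : ℝ → ℂ} (hf : ContDiff ℝ (⊤:ℕ∞) f) (hsupp : HasCompactSupport f) (z : ℂ) :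
    psi (deriv (deriv f)) z = z ^ 2 * psi f z := by
  have hd : ContDiff ℝ (⊤:ℕ∞) (deriv f) := (contDiff_infty_iff_deriv.mp hf).2
  have h1 : psi (deriv f) z = -z * psi f z :=
    integral_deriv_mul_exp (hf.of_le (by exact_mod_cast le_top)) hsupp z
  have h2 : psi (deriv (deriv f)) z = -z * psi (deriv f) z :=
    integral_deriv_mul_exp (hd.of_le (by exact_mod_cast le_top)) hsupp.deriv z
  rw [h2, h1]; ring

lemma psi_bound {f : ℝ → ℂ} (hf : Continuous f) (hsupp : HasCompactSupport f)
    {c : ℝ} (hc : 0 ≤ c) :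
    ∃ K : ℝ, 0 ≤ K ∧ ∀ z : ℂ, |z.re| ≤ c → ‖psi f z‖ ≤ K := by
  clear hc
  set w : ℝ → ℝ := fun u => ‖f u‖ * Real.exp (|u| * c) with hw
  have hwc : Continuous w := (hf.norm).mul ((Real.continuous_exp).comp
    ((_root_.continuous_abs).mul continuous_const))
  have hwsupp : HasCompactSupport w := (hsupp.norm).mul_right
  have hwint : Integrable w := hwc.integrable_of_hasCompactSupport hwsupp
  refine ⟨∫ u, w u, integral_nonneg (fun u => by positivity), fun z hz => ?_⟩
  calc ‖psi f z‖ ≤ ∫ u, ‖f u * Complex.exp (u * z)‖ := norm_integral_le_integral_norm _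
    _ ≤ ∫ u, w u := by
        apply integral_mono (integrable_kernel hf hsupp z).norm hwint
        intro u
        show ‖f u * Complex.exp (u * z)‖ ≤ ‖f u‖ * Real.exp (|u| * c)
        rw [norm_mul, Complex.norm_exp]
        have : ((u:ℂ) * z).re = u * z.re := by simp
        rw [this]
        apply mul_le_mul_of_nonneg_left _ (norm_nonneg _)
        apply Real.exp_le_exp.2
        calc u * z.re ≤ |u * z.re| := le_abs_self _
          _ = |u| * |z.re| := abs_mul u z.re
          _ ≤ |u| * c := by apply mul_le_mul_of_nonneg_left hz (abs_nonneg u)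

lemma psi_decay {f : ℝ → ℂ} (hf : ContDiff ℝ (⊤:ℕ∞) f) (hsupp : HasCompactSupport f)
    {c : ℝ} (hc : 0 ≤ c) :
    ∃ B : ℝ, 0 ≤ B ∧ ∀ z : ℂ, |z.re| ≤ c → ‖psi f z‖ ≤ B / (1 + z.im ^ 2) := by
  obtain ⟨K₀, hK₀0, hK₀⟩ := psi_bound hf.continuous hsupp hc
  have hd2 : Continuous (deriv (deriv f)) := by
    have h1 : ContDiff ℝ (⊤:ℕ∞) (deriv f) := (contDiff_infty_iff_deriv.mp hf).2
    exact ((contDiff_infty_iff_deriv.mp h1).2).continuous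
  obtain ⟨K₂, hK₂0, hK₂⟩ := psi_bound hd2 hsupp.deriv.deriv hc
  refine ⟨2 * (K₀ + K₂), by positivity, fun z hz => ?_⟩
  have him : (0:ℝ) < 1 + z.im ^ 2 := by positivity
  rcases le_total (z.im ^ 2) 1 with h1 | h1
  · have h0 : ‖psi f z‖ ≤ K₀ := hK₀ z hz
    have h2 : 1 + z.im ^ 2 ≤ 2 := by linarith
    calc ‖psi f z‖ ≤ K₀ := h0
      _ ≤ 2 * (K₀ + K₂) / 2 := by linarith
      _ ≤ 2 * (K₀ + K₂) / (1 + z.im ^ 2) := by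
          apply div_le_div_of_nonneg_left (by positivity) him h2
  · have hzsq : psi (deriv (deriv f)) z = z ^ 2 * psi f z := psi_sq hf hsupp z
    have habs : ‖z ^ 2 * psi f z‖ ≤ K₂ := hzsq ▸ hK₂ z hz
    have him2 : z.im ^ 2 ≤ ‖z‖ ^ 2 := by
      have := Complex.abs_im_le_norm z
      nlinarith [norm_nonneg z, abs_nonneg z.im, _root_.sq_abs z.im]
    have hz2 : ‖z ^ 2 * psi f z‖ = ‖z‖ ^ 2 * ‖psi f z‖ := by
      rw [norm_mul, norm_pow]
    have hzim0 : (0:ℝ) < z.im ^ 2 := by nlinarith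
    have key : z.im ^ 2 * ‖psi f z‖ ≤ K₂ := by
      calc z.im ^ 2 * ‖psi f z‖ ≤ ‖z‖ ^ 2 * ‖psi f z‖ :=
            mul_le_mul_of_nonneg_right him2 (norm_nonneg _)
        _ ≤ K₂ := by rw [← hz2]; exact habs
    have h4 : ‖psi f z‖ ≤ K₂ / z.im ^ 2 := by
      rw [le_div_iff₀ hzim0]; linarith [key]
    have h3 : K₂ / z.im ^ 2 ≤ 2 * (K₀ + K₂) / (1 + z.im ^ 2) := by
      rw [div_le_div_iff₀ hzim0 him]
      nlinarith
    exact h4.trans h3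

lemma psi_hasDerivAt {f : ℝ → ℂ} (hf : Continuous f) (hsupp : HasCompactSupport f) (z : ℂ) :
    HasDerivAt (psi f) (psi (fun u : ℝ => (u:ℂ) * f u) z) z := by
  set bound : ℝ → ℝ := fun u => ‖f u‖ * |u| * Real.exp (|u| * (|z.re| + 1)) with hb
  have hbc : Continuous bound := ((hf.norm).mul (_root_.continuous_abs)).mul
    ((Real.continuous_exp).comp ((_root_.continuous_abs).mul continuous_const))
  have hbsupp : HasCompactSupport bound := ((hsupp.norm).mul_right).mul_right
  have hbint : Integrable bound := hbc.integrable_of_hasCompactSupport hbsupp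
  have hmeas : ∀ w : ℂ, AEStronglyMeasurable (fun u : ℝ => f u * Complex.exp (u * w)) volume :=
    fun w => (integrable_kernel hf hsupp w).aestronglyMeasurable
  have key := hasDerivAt_integral_of_dominated_loc_of_deriv_le (μ := volume)
    (F := fun (w : ℂ) (u : ℝ) => f u * Complex.exp (u * w))
    (F' := fun (w : ℂ) (u : ℝ) => f u * (Complex.exp (u * w) * u)) (x₀ := z)
    (bound := bound) (Metric.ball_mem_nhds z one_pos)
    (Filter.Eventually.of_forall hmeas)
    (integrable_kernel hf hsupp z)
    ?_ ?_ hbint ?_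
  · have h := key.2
    have heq : (∫ u : ℝ, f u * (Complex.exp (u * z) * u)) = psi (fun u : ℝ => (u:ℂ) * f u) z := by
      rw [psi]; congr 1; funext u; ring
    rw [heq] at h
    exact h
  · apply Continuous.aestronglyMeasurable
    exact (hf.mul ((Complex.continuous_exp.comp (Complex.continuous_ofReal.mul
      continuous_const)).mul Complex.continuous_ofReal))
  · apply Filter.Eventually.of_forall
    intro u w hw
    rw [norm_mul, norm_mul]
    have h1 : ‖Complex.exp ((u:ℂ) * w)‖ ≤ Real.exp (|u| * (|z.re| + 1)) := by
      rw [Complex.norm_exp]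
      apply Real.exp_le_exp.2
      have hre : ((u:ℂ) * w).re = u * w.re := by simp
      rw [hre]
      have hwre : |w.re| ≤ |z.re| + 1 := by
        have h2 := Complex.abs_re_le_norm (w - z)
        have hd : ‖w - z‖ < 1 := by
          simpa [Complex.dist_eq] using Metric.mem_ball.mp hw
        have h3 : |w.re - z.re| < 1 := by
          simpa [Complex.sub_re] using lt_of_le_of_lt h2 hd
        have h4 : |w.re| - |z.re| ≤ |w.re - z.re| := abs_sub_abs_le_abs_sub _ _
        linarith
      calc u * w.re ≤ |u * w.re| := le_abs_self _
        _ = |u| * |w.re| := abs_mul _ _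
        _ ≤ |u| * (|z.re| + 1) := mul_le_mul_of_nonneg_left hwre (abs_nonneg u)
    calc ‖f u‖ * (‖Complex.exp ((u:ℂ) * w)‖ * ‖(u:ℂ)‖)
        = ‖f u‖ * ‖(u:ℂ)‖ * ‖Complex.exp ((u:ℂ) * w)‖ := by ring
      _ ≤ ‖f u‖ * |u| * Real.exp (|u| * (|z.re| + 1)) := by
          rw [Complex.norm_real, Real.norm_eq_abs]
          exact mul_le_mul_of_nonneg_left h1 (by positivity)
  · apply Filter.Eventually.of_forall
    intro u w hw
    have h1 : HasDerivAt (fun w : ℂ => Complex.exp ((u:ℂ) * w)) (Complex.exp ((u:ℂ) * w) * u) w := by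
      simpa [mul_comm] using ((hasDerivAt_id w).const_mul (u:ℂ)).cexp
    exact h1.const_mul (f u)

lemma psi_continuous {f : ℝ → ℂ} (hf : Continuous f) (hsupp : HasCompactSupport f) :
    Continuous (psi f) :=
  continuous_iff_continuousAt.2 fun z => (psi_hasDerivAt hf hsupp z).continuousAt

section Res

variable {X : Type*} [NormedAddCommGroup X] [NormedSpace ℂ X]

lemma resolvent_sub {A : X →ₗ.[ℂ] X} {z w : ℂ} {Rz Rw : X →L[ℂ] X}
    (hz : IsResolventAt A z Rz) (hw : IsResolventAt A w Rw) (y : X) :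
    Rw y - Rz y = (z - w) • Rz (Rw y) := by
  obtain ⟨hmem, hy⟩ := hw.1 y
  have h2 := hz.2 ⟨Rw y, hmem⟩
  simp only [Submodule.coe_mk] at h2
  have h3 : z • Rw y - A ⟨Rw y, hmem⟩ = (z - w) • Rw y + (w • Rw y - A ⟨Rw y, hmem⟩) := by
    rw [sub_smul]; abel
  rw [hy] at h3
  rw [h3, map_add, _root_.map_smul] at h2
  have h4 := congrArg (fun v => v - Rz y) h2
  simp only [add_sub_cancel_right] at h4
  exact h4.symm

lemma strip_mem_nhds {ρ₀ : ℝ} {z : ℂ} (hz : |z.re| < ρ₀) : {w : ℂ | |w.re| < ρ₀} ∈ 𝓝 z :=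
  ((isOpen_Iio.preimage ((_root_.continuous_abs).comp Complex.continuous_re)).mem_nhds hz)

variable {A : X →ₗ.[ℂ] X} {ρ₀ : ℝ} {R : ℂ → X →L[ℂ] X} {C : ℝ}

lemma res_lip (hR : ∀ lam : ℂ, |lam.re| < ρ₀ → IsResolventAt A lam (R lam))
    (hC : ∀ lam : ℂ, |lam.re| < ρ₀ → ‖R lam‖ ≤ C) (hC0 : 0 ≤ C)
    {z w : ℂ} (hz : |z.re| < ρ₀) (hw : |w.re| < ρ₀) (y : X) :
    ‖R w y - R z y‖ ≤ C ^ 2 * ‖y‖ * ‖w - z‖ := by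
  rw [resolvent_sub (hR z hz) (hR w hw) y, norm_smul]
  have h1 : ‖R z ((R w) y)‖ ≤ C * (C * ‖y‖) := by
    calc ‖R z ((R w) y)‖ ≤ ‖R z‖ * ‖(R w) y‖ := (R z).le_opNorm _
      _ ≤ C * (C * ‖y‖) := by
          apply mul_le_mul (hC z hz) _ (norm_nonneg _) hC0
          calc ‖(R w) y‖ ≤ ‖R w‖ * ‖y‖ := (R w).le_opNorm _
            _ ≤ C * ‖y‖ := mul_le_mul_of_nonneg_right (hC w hw) (norm_nonneg _)
  have h2 : ‖z - w‖ = ‖w - z‖ := norm_sub_rev _ _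
  rw [h2]
  calc ‖w - z‖ * ‖R z ((R w) y)‖ ≤ ‖w - z‖ * (C * (C * ‖y‖)) :=
        mul_le_mul_of_nonneg_left h1 (norm_nonneg _)
    _ = C ^ 2 * ‖y‖ * ‖w - z‖ := by ring

lemma res_tendsto (hR : ∀ lam : ℂ, |lam.re| < ρ₀ → IsResolventAt A lam (R lam))
    (hC : ∀ lam : ℂ, |lam.re| < ρ₀ → ‖R lam‖ ≤ C) (hC0 : 0 ≤ C)
    {z : ℂ} (hz : |z.re| < ρ₀) (y : X) :
    Tendsto (fun w => R w y) (𝓝 z) (𝓝 (R z y)) := by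
  have h0 : Tendsto (fun w => R w y - R z y) (𝓝 z) (𝓝 0) := by
    apply squeeze_zero_norm'
    · filter_upwards [strip_mem_nhds hz] with w hw
      exact res_lip hR hC hC0 hz hw y
    · have h5 : Tendsto (fun w : ℂ => C ^ 2 * ‖y‖ * ‖w - z‖) (𝓝 z) (𝓝 (C ^ 2 * ‖y‖ * ‖z - z‖)) :=
        (continuous_const.mul ((continuous_id.sub continuous_const).norm)).tendsto z
      simpa using h5
  simpa using h0.add_const (R z y)

lemma res_deriv (hR : ∀ lam : ℂ, |lam.re| < ρ₀ → IsResolventAt A lam (R lam))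
    (hC : ∀ lam : ℂ, |lam.re| < ρ₀ → ‖R lam‖ ≤ C) (hC0 : 0 ≤ C)
    {z : ℂ} (hz : |z.re| < ρ₀) (x : X) (xs : X →L[ℂ] ℂ) :
    HasDerivAt (fun w => xs (R w x)) (-(xs (R z (R z x)))) z := by
  rw [hasDerivAt_iff_tendsto_slope]
  set L : ℂ := -(xs (R z (R z x))) with hL
  have h0 : Tendsto (fun w => slope (fun w => xs (R w x)) z w - L) (𝓝[≠] z) (𝓝 0) := by
    apply squeeze_zero_norm' (a := fun w => ‖xs‖ * (C * (C ^ 2 * ‖x‖ * ‖w - z‖)))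
    · filter_upwards [self_mem_nhdsWithin,
        mem_nhdsWithin_of_mem_nhds (strip_mem_nhds hz)] with w hne hw
      have hwz : (w : ℂ) ≠ z := hne
      have hslope : slope (fun w => xs (R w x)) z w = -(xs (R z (R w x))) := by
        rw [slope_def_field]
        have hnum : xs (R w x) - xs (R z x) = (z - w) * xs (R z (R w x)) := by
          rw [← map_sub, resolvent_sub (hR z hz) (hR w hw) x, _root_.map_smul, smul_eq_mul]
        rw [div_eq_iff (sub_ne_zero.2 hwz), hnum]
        ring
      rw [hslope, hL]
      have h6 : -(xs (R z (R w x))) - -(xs (R z (R z x))) = -(xs (R z (R w x - R z x))) := by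
        rw [map_sub, map_sub]; ring
      rw [h6, norm_neg]
      calc ‖xs (R z (R w x - R z x))‖ ≤ ‖xs‖ * ‖R z (R w x - R z x)‖ := xs.le_opNorm _
        _ ≤ ‖xs‖ * (C * (C ^ 2 * ‖x‖ * ‖w - z‖)) := by
            apply mul_le_mul_of_nonneg_left _ (norm_nonneg _)
            calc ‖R z (R w x - R z x)‖ ≤ ‖R z‖ * ‖R w x - R z x‖ := (R z).le_opNorm _
              _ ≤ C * (C ^ 2 * ‖x‖ * ‖w - z‖) := by
                  apply mul_le_mul (hC z hz) (res_lip hR hC hC0 hz hw x) (norm_nonneg _) hC0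
    · have h5 : Tendsto (fun w : ℂ => ‖xs‖ * (C * (C ^ 2 * ‖x‖ * ‖w - z‖))) (𝓝 z)
          (𝓝 (‖xs‖ * (C * (C ^ 2 * ‖x‖ * ‖z - z‖)))) :=
        (continuous_const.mul (continuous_const.mul (continuous_const.mul
          ((continuous_id.sub continuous_const).norm)))).tendsto z
      have h7 := h5.mono_left (nhdsWithin_le_nhds (s := {z}ᶜ))
      simpa using h7
  simpa using h0.add_const L

lemma res2_tendsto (hR : ∀ lam : ℂ, |lam.re| < ρ₀ → IsResolventAt A lam (R lam))
    (hC : ∀ lam : ℂ, |lam.re| < ρ₀ → ‖R lam‖ ≤ C) (hC0 : 0 ≤ C)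
    {z : ℂ} (hz : |z.re| < ρ₀) (x : X) :
    Tendsto (fun w => R w (R w x)) (𝓝 z) (𝓝 (R z (R z x))) := by
  have h1 : Tendsto (fun w => R w (R w x - R z x)) (𝓝 z) (𝓝 0) := by
    apply squeeze_zero_norm' (a := fun w => C * (C ^ 2 * ‖x‖ * ‖w - z‖))
    · filter_upwards [strip_mem_nhds hz] with w hw
      calc ‖R w (R w x - R z x)‖ ≤ ‖R w‖ * ‖R w x - R z x‖ := (R w).le_opNorm _
        _ ≤ C * (C ^ 2 * ‖x‖ * ‖w - z‖) :=
            mul_le_mul (hC w hw) (res_lip hR hC hC0 hz hw x) (norm_nonneg _) hC0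
    · have h5 : Tendsto (fun w : ℂ => C * (C ^ 2 * ‖x‖ * ‖w - z‖)) (𝓝 z)
          (𝓝 (C * (C ^ 2 * ‖x‖ * ‖z - z‖))) :=
        (continuous_const.mul (continuous_const.mul
          ((continuous_id.sub continuous_const).norm))).tendsto z
      simpa using h5
  have h2 : Tendsto (fun w => R w (R z x) - R z (R z x)) (𝓝 z) (𝓝 0) := by
    have h8 := (res_tendsto hR hC hC0 hz (R z x)).sub (tendsto_const_nhds (x := R z (R z x)))
    simpa using h8
  have h3 := h1.add h2
  rw [add_zero] at h3
  have h4 : (fun w => R w (R w x - R z x) + (R w (R z x) - R z (R z x)))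
      = fun w => R w (R w x) - R z (R z x) := by
    funext w; rw [map_sub]; abel
  rw [h4] at h3
  simpa using h3.add_const (R z (R z x))

end Res

end RShiftAux

/-- Lemma 2.6/`l3`: `ř₀(t) = e^{ρt} ř_ρ(t)` as tempered distributions;
equivalently `⟨ř_ρ, Φ⟩ = ⟨ř₀, e^{-ρ·}Φ⟩` for every compactly supported Schwartz `Φ`, where
`⟨řσ, Ψ⟩ = ∫ ⟨x*, R(is+σ)x⟩ Ψˇ(s) ds`. -/
theorem rcheck_exponential_shift
    {X : Type*} [NormedAddCommGroup X] [NormedSpace ℂ X] [CompleteSpace X]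
    (S : C0Semigroup X) (A : X →ₗ.[ℂ] X) (hGen : S.IsGenerator A)
    (ρ₀ : ℝ) (hρ₀ : 0 < ρ₀)
    (R : ℂ → X →L[ℂ] X)
    (hR : ∀ lam : ℂ, |lam.re| < ρ₀ → IsResolventAt A lam (R lam))
    (hRbdd : ∃ C : ℝ, ∀ lam : ℂ, |lam.re| < ρ₀ → ‖R lam‖ ≤ C) :
    ∀ (ρ : ℝ), |ρ| < ρ₀ → ∀ (x : X) (xs : X →L[ℂ] ℂ) (Φ : SchwartzMap ℝ ℂ),
      HasCompactSupport (fun u : ℝ => Φ u) →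
      ∫ s : ℝ, xs (R (Complex.I * (s : ℂ) + (ρ : ℂ)) x) * fourierInvI (fun u => Φ u) s
        = ∫ s : ℝ, xs (R (Complex.I * (s : ℂ)) x) *
            fourierInvI (fun u : ℝ => Complex.exp (-((ρ : ℂ) * (u : ℂ))) * Φ u) s := by
  intro ρ hρ x xs Φ hΦ
  obtain ⟨C₀, hC₀⟩ := hRbdd
  set C : ℝ := max C₀ 0 with hCdef
  have hC : ∀ lam : ℂ, |lam.re| < ρ₀ → ‖R lam‖ ≤ C :=
    fun lam h => (hC₀ lam h).trans (le_max_left _ _)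
  have hC0 : (0:ℝ) ≤ C := le_max_right _ _
  set f : ℝ → ℂ := fun u => Φ u with hfdef
  have hfc : Continuous f := Φ.continuous
  have hfsm : ContDiff ℝ (⊤:ℕ∞) f := Φ.smooth ⊤
  have hfsupp : HasCompactSupport f := hΦ
  set g : ℝ → ℂ := fun u : ℝ => (u:ℂ) * f u with hgdef
  have hgc : Continuous g := Complex.continuous_ofReal.mul hfc
  have hgsm : ContDiff ℝ (⊤:ℕ∞) g := (Complex.ofRealCLM.contDiff).mul hfsm
  have hgsupp : HasCompactSupport g := hfsupp.mul_left
  have hc2 : (0:ℝ) ≤ 2*ρ₀ := by linarith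
  obtain ⟨Bf, hBf0, hBf⟩ := RShiftAux.psi_decay hfsm hfsupp hc2
  obtain ⟨Bg, hBg0, hBg⟩ := RShiftAux.psi_decay hgsm hgsupp hc2
  set ψf : ℂ → ℂ := RShiftAux.psi f with hψfdef
  set ψg : ℂ → ℂ := RShiftAux.psi g with hψgdef
  set H : ℂ → ℂ := fun w => xs (R w x) * ψf (w - (ρ:ℂ)) with hHdef
  set H' : ℂ → ℂ := fun w =>
    -(xs (R w (R w x))) * ψf (w - (ρ:ℂ)) + xs (R w x) * ψg (w - (ρ:ℂ)) with hH'def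
  have hHderiv : ∀ w : ℂ, |w.re| < ρ₀ → HasDerivAt H (H' w) w := by
    intro w hw
    have h1 := RShiftAux.res_deriv hR hC hC0 hw x xs
    have h2 : HasDerivAt (fun w : ℂ => ψf (w - (ρ:ℂ))) (ψg (w - (ρ:ℂ))) w :=
      HasDerivAt.comp_sub_const w (ρ:ℂ) (RShiftAux.psi_hasDerivAt hfc hfsupp (w - (ρ:ℂ)))
    exact h1.mul h2
  have hstrip_shift : ∀ w : ℂ, |w.re| < ρ₀ → |(w - (ρ:ℂ)).re| ≤ 2*ρ₀ := by
    intro w hw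
    rw [Complex.sub_re, Complex.ofReal_re]
    have h1 : |w.re - ρ| ≤ |w.re| + |ρ| := abs_sub _ _
    linarith
  set D : ℝ := ‖xs‖ * C^2 * ‖x‖ * Bf + ‖xs‖ * C * ‖x‖ * Bg with hDdef
  have hxsR : ∀ w : ℂ, |w.re| < ρ₀ → ‖xs (R w x)‖ ≤ ‖xs‖ * C * ‖x‖ := by
    intro w hw
    calc ‖xs (R w x)‖ ≤ ‖xs‖ * ‖R w x‖ := xs.le_opNorm _
      _ ≤ ‖xs‖ * (C * ‖x‖) := by
          apply mul_le_mul_of_nonneg_left _ (norm_nonneg _)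
          calc ‖R w x‖ ≤ ‖R w‖ * ‖x‖ := (R w).le_opNorm _
            _ ≤ C * ‖x‖ := mul_le_mul_of_nonneg_right (hC w hw) (norm_nonneg _)
      _ = ‖xs‖ * C * ‖x‖ := by ring
  have hxsRR : ∀ w : ℂ, |w.re| < ρ₀ → ‖xs (R w (R w x))‖ ≤ ‖xs‖ * C^2 * ‖x‖ := by
    intro w hw
    calc ‖xs (R w (R w x))‖ ≤ ‖xs‖ * ‖R w (R w x)‖ := xs.le_opNorm _
      _ ≤ ‖xs‖ * (C * (C * ‖x‖)) := by
          apply mul_le_mul_of_nonneg_left _ (norm_nonneg _)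
          calc ‖R w (R w x)‖ ≤ ‖R w‖ * ‖R w x‖ := (R w).le_opNorm _
            _ ≤ C * (C * ‖x‖) := by
                apply mul_le_mul (hC w hw) _ (norm_nonneg _) hC0
                calc ‖R w x‖ ≤ ‖R w‖ * ‖x‖ := (R w).le_opNorm _
                  _ ≤ C * ‖x‖ := mul_le_mul_of_nonneg_right (hC w hw) (norm_nonneg _)
      _ = ‖xs‖ * C^2 * ‖x‖ := by ring
  have hsubim : ∀ w : ℂ, (w - (ρ:ℂ)).im = w.im := by intro w; simp
  have hψfb : ∀ w : ℂ, |w.re| < ρ₀ → ‖ψf (w - (ρ:ℂ))‖ ≤ Bf / (1 + w.im^2) := by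
    intro w hw
    have h9 := hBf (w - (ρ:ℂ)) (hstrip_shift w hw)
    rwa [hsubim w] at h9
  have hψgb : ∀ w : ℂ, |w.re| < ρ₀ → ‖ψg (w - (ρ:ℂ))‖ ≤ Bg / (1 + w.im^2) := by
    intro w hw
    have h9 := hBg (w - (ρ:ℂ)) (hstrip_shift w hw)
    rwa [hsubim w] at h9
  have hH'bound : ∀ w : ℂ, |w.re| < ρ₀ → ‖H' w‖ ≤ D / (1 + w.im^2) := by
    intro w hw
    have hpos : (0:ℝ) < 1 + w.im^2 := by positivity
    have hsplit : D / (1 + w.im^2)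
        = (‖xs‖ * C^2 * ‖x‖) * (Bf / (1 + w.im^2)) + (‖xs‖ * C * ‖x‖) * (Bg / (1 + w.im^2)) := by
      rw [hDdef]; field_simp; try ring
    rw [hH'def, hsplit]
    apply (norm_add_le _ _).trans
    apply add_le_add
    · rw [norm_mul, norm_neg]
      exact mul_le_mul (hxsRR w hw) (hψfb w hw) (norm_nonneg _) (by positivity)
    · rw [norm_mul]
      exact mul_le_mul (hxsR w hw) (hψgb w hw) (norm_nonneg _) (by positivity)
  have hHbound : ∀ w : ℂ, |w.re| < ρ₀ → ‖H w‖ ≤ (‖xs‖ * C * ‖x‖ * Bf) / (1 + w.im^2) := by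
    intro w hw
    have hpos : (0:ℝ) < 1 + w.im^2 := by positivity
    calc ‖H w‖ = ‖xs (R w x)‖ * ‖ψf (w - (ρ:ℂ))‖ := by rw [hHdef, norm_mul]
      _ ≤ (‖xs‖ * C * ‖x‖) * (Bf / (1 + w.im^2)) :=
          mul_le_mul (hxsR w hw) (hψfb w hw) (norm_nonneg _) (by positivity)
      _ = (‖xs‖ * C * ‖x‖ * Bf) / (1 + w.im^2) := by ring
  have hpt : ∀ (τ : ℝ) (s : ℝ), (Complex.I * (s:ℂ) + (τ:ℂ)).re = τ := by
    intro τ s; simp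
  have hptim : ∀ (τ : ℝ) (s : ℝ), (Complex.I * (s:ℂ) + (τ:ℂ)).im = s := by
    intro τ s; simp
  have hlinec : ∀ τ : ℝ, Continuous (fun s : ℝ => Complex.I * (s:ℂ) + (τ:ℂ)) :=
    fun τ => (continuous_const.mul Complex.continuous_ofReal).add continuous_const
  have hHcont : ∀ τ : ℝ, |τ| < ρ₀ → Continuous (fun s : ℝ => H (Complex.I * (s:ℂ) + (τ:ℂ))) := by
    intro τ hτ
    refine continuous_iff_continuousAt.2 fun s => ?_
    have hca := (hHderiv (Complex.I * (s:ℂ) + (τ:ℂ)) (by rw [hpt]; exact hτ)).continuousAt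
    exact ContinuousAt.comp (g := H) (f := fun s : ℝ => Complex.I * (s:ℂ) + (τ:ℂ))
      hca ((hlinec τ).continuousAt)
  have hH'ca : ∀ w : ℂ, |w.re| < ρ₀ → ContinuousAt H' w := by
    intro w hw
    have hpsic := RShiftAux.psi_continuous hfc hfsupp
    have hpsigc := RShiftAux.psi_continuous hgc hgsupp
    have hsubc : ContinuousAt (fun w : ℂ => w - (ρ:ℂ)) w :=
      (continuous_id.sub continuous_const).continuousAt
    have h1 : ContinuousAt (fun w : ℂ => ψf (w - (ρ:ℂ))) w :=
      ContinuousAt.comp (g := ψf) (f := fun w : ℂ => w - (ρ:ℂ)) hpsic.continuousAt hsubc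
    have h2 : ContinuousAt (fun w : ℂ => ψg (w - (ρ:ℂ))) w :=
      ContinuousAt.comp (g := ψg) (f := fun w : ℂ => w - (ρ:ℂ)) hpsigc.continuousAt hsubc
    have h3 : ContinuousAt (fun w : ℂ => xs (R w x)) w :=
      ContinuousAt.comp (g := fun v : X => xs v) (f := fun w : ℂ => R w x)
        xs.continuous.continuousAt (RShiftAux.res_tendsto hR hC hC0 hw x)
    have h4 : ContinuousAt (fun w : ℂ => xs (R w (R w x))) w :=
      ContinuousAt.comp (g := fun v : X => xs v) (f := fun w : ℂ => R w (R w x))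
        xs.continuous.continuousAt (RShiftAux.res2_tendsto hR hC hC0 hw x)
    rw [hH'def]
    exact ((h4.neg).mul h1).add (h3.mul h2)
  have hH'cont : ∀ τ : ℝ, |τ| < ρ₀ → Continuous (fun s : ℝ => H' (Complex.I * (s:ℂ) + (τ:ℂ))) := by
    intro τ hτ
    refine continuous_iff_continuousAt.2 fun s => ?_
    exact ContinuousAt.comp (g := H') (f := fun s : ℝ => Complex.I * (s:ℂ) + (τ:ℂ))
      (hH'ca (Complex.I * (s:ℂ) + (τ:ℂ)) (by rw [hpt]; exact hτ)) ((hlinec τ).continuousAt)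
  have hbintD : Integrable (fun s : ℝ => D / (1 + s^2)) := by
    simpa [div_eq_mul_inv] using integrable_inv_one_add_sq.const_mul D
  have hbintHf : Integrable (fun s : ℝ => (‖xs‖ * C * ‖x‖ * Bf) / (1 + s^2)) := by
    simpa [div_eq_mul_inv] using integrable_inv_one_add_sq.const_mul (‖xs‖ * C * ‖x‖ * Bf)
  have hH'int : ∀ τ : ℝ, |τ| < ρ₀ →
      Integrable (fun s : ℝ => H' (Complex.I * (s:ℂ) + (τ:ℂ))) := by
    intro τ hτ
    apply hbintD.mono' ((hH'cont τ hτ).aestronglyMeasurable)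
    apply Filter.Eventually.of_forall
    intro s
    have h9 := hH'bound (Complex.I * (s:ℂ) + (τ:ℂ)) (by rw [hpt]; exact hτ)
    rwa [hptim τ s] at h9
  have hsq_atTop : Tendsto (fun s : ℝ => 1 + s^2) atTop atTop :=
    tendsto_atTop_add_const_left atTop (1:ℝ) (tendsto_pow_atTop (n := 2) (by norm_num))
  have hsq_atBot : Tendsto (fun s : ℝ => 1 + s^2) atBot atTop := by
    apply tendsto_atTop_add_const_left atBot (1:ℝ)
    have hneg : Tendsto (fun s : ℝ => -s) atBot atTop := tendsto_neg_atBot_atTop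
    have h9 := (tendsto_pow_atTop (n := 2) (by norm_num : (2:ℕ) ≠ 0)).comp hneg
    simpa [Function.comp_def, neg_sq] using h9
  have hkey : ∀ τ : ℝ, |τ| < ρ₀ → (∫ s : ℝ, H' (Complex.I * (s:ℂ) + (τ:ℂ))) = 0 := by
    intro τ hτ
    have hline : ∀ s : ℝ, HasDerivAt (fun s : ℝ => H (Complex.I * (s:ℂ) + (τ:ℂ)))
        (Complex.I * H' (Complex.I * (s:ℂ) + (τ:ℂ))) s := by
      intro s
      have h0 : HasDerivAt (fun w : ℂ => Complex.I * w + (τ:ℂ)) Complex.I (s:ℂ) := by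
        simpa using ((hasDerivAt_id ((s:ℂ))).const_mul Complex.I).add_const (τ:ℂ)
      have h1 : HasDerivAt (fun w : ℂ => H (Complex.I * w + (τ:ℂ)))
          (H' (Complex.I * (s:ℂ) + (τ:ℂ)) * Complex.I) (s:ℂ) :=
        HasDerivAt.comp (h := fun w : ℂ => Complex.I * w + (τ:ℂ)) (h₂ := H) (s:ℂ)
          (hHderiv (Complex.I * (s:ℂ) + (τ:ℂ)) (by rw [hpt]; exact hτ)) h0
      have h2 := h1.comp_ofReal
      simpa [mul_comm] using h2
    have htop : Tendsto (fun s : ℝ => H (Complex.I * (s:ℂ) + (τ:ℂ))) atTop (𝓝 0) := by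
      apply squeeze_zero_norm' (a := fun s : ℝ => (‖xs‖ * C * ‖x‖ * Bf) / (1 + s^2))
      · apply Filter.Eventually.of_forall
        intro s
        have h9 := hHbound (Complex.I * (s:ℂ) + (τ:ℂ)) (by rw [hpt]; exact hτ)
        rwa [hptim τ s] at h9
      · exact Tendsto.div_atTop tendsto_const_nhds hsq_atTop
    have hbot : Tendsto (fun s : ℝ => H (Complex.I * (s:ℂ) + (τ:ℂ))) atBot (𝓝 0) := by
      apply squeeze_zero_norm' (a := fun s : ℝ => (‖xs‖ * C * ‖x‖ * Bf) / (1 + s^2))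
      · apply Filter.Eventually.of_forall
        intro s
        have h9 := hHbound (Complex.I * (s:ℂ) + (τ:ℂ)) (by rw [hpt]; exact hτ)
        rwa [hptim τ s] at h9
      · exact Tendsto.div_atTop tendsto_const_nhds hsq_atBot
    have hint' : Integrable (fun s : ℝ => Complex.I * H' (Complex.I * (s:ℂ) + (τ:ℂ))) :=
      (hH'int τ hτ).const_mul Complex.I
    have hzero := RShiftAux.integral_deriv_eq_zero hline hint' htop hbot
    rw [integral_const_mul] at hzero
    exact (mul_eq_zero.mp hzero).resolve_left Complex.I_ne_zero
  set G : ℝ → ℂ := fun τ : ℝ => ∫ s : ℝ, H (Complex.I * (s:ℂ) + (τ:ℂ)) with hGdef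
  have hGderiv : ∀ τ : ℝ, |τ| < ρ₀ → HasDerivAt G 0 τ := by
    intro τ hτ
    have hε : 0 < ρ₀ - |τ| := by linarith
    have hball : ∀ τ' : ℝ, τ' ∈ Metric.ball τ (ρ₀ - |τ|) → |τ'| < ρ₀ := by
      intro τ' h
      have h1 : |τ' - τ| < ρ₀ - |τ| := by simpa [Real.dist_eq] using h
      have h2 : |τ'| - |τ| ≤ |τ' - τ| := abs_sub_abs_le_abs_sub _ _
      linarith
    have key := hasDerivAt_integral_of_dominated_loc_of_deriv_le (μ := volume)
      (F := fun (τ' : ℝ) (s : ℝ) => H (Complex.I * (s:ℂ) + (τ':ℂ)))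
      (F' := fun (τ' : ℝ) (s : ℝ) => H' (Complex.I * (s:ℂ) + (τ':ℂ)))
      (x₀ := τ) (bound := fun s : ℝ => D / (1 + s^2)) (Metric.ball_mem_nhds τ hε) ?_ ?_ ?_ ?_ hbintD ?_
    · have h2 := key.2
      rw [hkey τ hτ] at h2
      exact h2
    · filter_upwards [Metric.ball_mem_nhds τ hε] with τ' hτ'
      exact (hHcont τ' (hball τ' hτ')).aestronglyMeasurable
    · apply hbintHf.mono' ((hHcont τ hτ).aestronglyMeasurable)
      apply Filter.Eventually.of_forall
      intro s
      have h9 := hHbound (Complex.I * (s:ℂ) + (τ:ℂ)) (by rw [hpt]; exact hτ)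
      rwa [hptim τ s] at h9
    · exact (hH'cont τ hτ).aestronglyMeasurable
    · apply Filter.Eventually.of_forall
      intro s τ' hτ'
      have h9 := hH'bound (Complex.I * (s:ℂ) + (τ':ℂ)) (by rw [hpt]; exact hball τ' hτ')
      rwa [hptim τ' s] at h9
    · apply Filter.Eventually.of_forall
      intro s τ' hτ'
      have hcder : HasDerivAt (fun w : ℂ => H (Complex.I * (s:ℂ) + w))
          (H' (Complex.I * (s:ℂ) + (τ':ℂ))) ((τ':ℝ) : ℂ) :=
        HasDerivAt.comp_const_add (Complex.I * (s:ℂ)) ((τ':ℝ) : ℂ)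
          (hHderiv (Complex.I * (s:ℂ) + (τ':ℂ)) (by rw [hpt]; exact hball τ' hτ'))
      exact hcder.comp_ofReal
  have huIcc : ∀ τ ∈ Set.uIcc (0:ℝ) ρ, |τ| < ρ₀ := by
    intro τ hτ
    rw [Set.mem_uIcc] at hτ
    rcases abs_lt.mp hρ with ⟨h1, h2⟩
    rw [abs_lt]
    rcases hτ with ⟨ha, hb⟩ | ⟨ha, hb⟩ <;> constructor <;> linarith
  have hGconst : G ρ = G 0 := by
    have hmvt := Convex.norm_image_sub_le_of_norm_hasDerivWithin_le
      (f := G) (f' := fun _ : ℝ => (0:ℂ)) (s := Set.uIcc (0:ℝ) ρ) (C := 0)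
      (fun τ hτ => (hGderiv τ (huIcc τ hτ)).hasDerivWithinAt)
      (fun τ _ => by simp) (convex_uIcc _ _) Set.left_mem_uIcc Set.right_mem_uIcc
    have h1 : ‖G ρ - G 0‖ ≤ 0 := by simpa using hmvt
    have h2 : G ρ - G 0 = 0 := norm_le_zero_iff.mp h1
    exact sub_eq_zero.mp h2
  have hfour1 : ∀ s : ℝ, fourierInvI (fun u : ℝ => (Φ u : ℂ)) s
      = (2 * Real.pi)⁻¹ • ψf (Complex.I * (s:ℂ)) := by
    intro s
    rw [fourierInvI]
    congr 1
    have h1 : (fun u : ℝ => Complex.exp (Complex.I * (u:ℂ) * (s:ℂ)) • (Φ u : ℂ))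
        = fun u : ℝ => f u * Complex.exp ((u:ℂ) * (Complex.I * (s:ℂ))) := by
      funext u
      rw [smul_eq_mul, show Complex.I * (u:ℂ) * (s:ℂ) = (u:ℂ) * (Complex.I * (s:ℂ)) by ring]
      rw [hfdef]
      ring
    rw [h1]
    rfl
  have hfour2 : ∀ s : ℝ, fourierInvI (fun u : ℝ => Complex.exp (-((ρ:ℂ) * (u:ℂ))) * Φ u) s
      = (2 * Real.pi)⁻¹ • ψf (Complex.I * (s:ℂ) - (ρ:ℂ)) := by
    intro s
    rw [fourierInvI]
    congr 1
    have h1 : (fun u : ℝ => Complex.exp (Complex.I * (u:ℂ) * (s:ℂ)) •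
          (Complex.exp (-((ρ:ℂ) * (u:ℂ))) * (Φ u : ℂ)))
        = fun u : ℝ => f u * Complex.exp ((u:ℂ) * (Complex.I * (s:ℂ) - (ρ:ℂ))) := by
      funext u
      rw [smul_eq_mul, show Complex.exp (Complex.I * (u:ℂ) * (s:ℂ)) *
          (Complex.exp (-((ρ:ℂ) * (u:ℂ))) * (Φ u : ℂ))
        = (Complex.exp (Complex.I * (u:ℂ) * (s:ℂ)) * Complex.exp (-((ρ:ℂ) * (u:ℂ)))) * (Φ u : ℂ)
        by ring, ← Complex.exp_add,
        show Complex.I * (u:ℂ) * (s:ℂ) + -((ρ:ℂ) * (u:ℂ))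
          = (u:ℂ) * (Complex.I * (s:ℂ) - (ρ:ℂ)) by ring]
      rw [hfdef]
      ring
    rw [h1]
    rfl
  calc ∫ s : ℝ, xs (R (Complex.I * (s:ℂ) + (ρ:ℂ)) x) * fourierInvI (fun u : ℝ => (Φ u : ℂ)) s
      = ∫ s : ℝ, (2 * Real.pi)⁻¹ • H (Complex.I * (s:ℂ) + (ρ:ℂ)) := by
        apply integral_congr_ae
        apply Filter.Eventually.of_forall
        intro s
        beta_reduce
        rw [hfour1 s, mul_smul_comm, hHdef]
        congr 2
        rw [show Complex.I * (s:ℂ) + (ρ:ℂ) - (ρ:ℂ) = Complex.I * (s:ℂ) by ring]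
    _ = (2 * Real.pi)⁻¹ • G ρ := by rw [integral_smul]
    _ = (2 * Real.pi)⁻¹ • G 0 := by rw [hGconst]
    _ = ∫ s : ℝ, (2 * Real.pi)⁻¹ • H (Complex.I * (s:ℂ) + ((0:ℝ):ℂ)) := by
        rw [integral_smul]
    _ = ∫ s : ℝ, xs (R (Complex.I * (s:ℂ)) x) *
          fourierInvI (fun u : ℝ => Complex.exp (-((ρ:ℂ) * (u:ℂ))) * Φ u) s := by
        apply integral_congr_ae
        apply Filter.Eventually.of_forall
        intro s
        beta_reduce
        have h0 : Complex.I * (s:ℂ) + ((0:ℝ):ℂ) = Complex.I * (s:ℂ) := by simp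
        rw [hfour2 s, mul_smul_comm, h0, hHdef]


end
end

section
/- Let T be a strongly continuous semigroup on a complex Banach space X with generator A and suppose iℤ ⊂ ρ(A). Then for every k ∈ ℤ and x ∈ X, (1/2π)R(ik)(I − T_{2π})x = (1/2π)∫_0^{2π} e^{−ikt} T_t x dt, and consequently the Cesàro sum satisfies (1/2π)(C,1)∑_{k∈ℤ} R(ik)(I − T_{2π})x = (1/2)(I + T_{2π})x for every x ∈ X. -/
open MeasureTheory Complex Filter Topology Set
open scoped ENNReal NNReal Real

noncomputable section

variable {X : Type*} [NormedAddCommGroup X] [NormedSpace ℂ X]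

section FejerAux

lemma sum_Icc_succ_both {M : Type*} [AddCommMonoid M] (n : ℕ) (f : ℤ → M) :
    ∑ k ∈ Finset.Icc (-(n+1:ℤ)) (n+1:ℤ), f k
      = f (-(n+1:ℤ)) + (∑ k ∈ Finset.Icc (-(n:ℤ)) (n:ℤ), f k) + f ((n:ℤ)+1) := by
  have h1 : Finset.Icc (-(n+1:ℤ)) (n+1:ℤ)
      = insert (-(n+1:ℤ)) (insert ((n:ℤ)+1) (Finset.Icc (-(n:ℤ)) (n:ℤ))) := by
    ext m; simp only [Finset.mem_Icc, Finset.mem_insert]; omega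
  rw [h1, Finset.sum_insert (by simp only [Finset.mem_insert, Finset.mem_Icc]; omega),
    Finset.sum_insert (by simp only [Finset.mem_Icc]; omega)]
  abel

lemma icc_zpow_sum (N : ℕ) (z : ℂ) (hz : z ≠ 0) :
    ∑ k ∈ Finset.Icc (-(N:ℤ)) (N:ℤ), z ^ k
      = (∑ i ∈ Finset.range N, z ^ ((i:ℤ) - N)) + ∑ m ∈ Finset.range (N+1), z ^ (m:ℤ) := by
  induction N with
  | zero => simp
  | succ n ih =>
      have : ((n:ℤ)+1) = ((n+1 : ℕ) : ℤ) := by push_cast; ring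
      rw [show (-(((n+1):ℕ):ℤ)) = -((n:ℤ)+1) by push_cast; ring,
        show ((((n+1):ℕ)):ℤ) = ((n:ℤ)+1) by push_cast; ring]
      rw [sum_Icc_succ_both n (fun k => z ^ k), ih]
      rw [Finset.sum_range_succ' (fun i => z ^ ((i:ℤ) - ((n:ℕ)+1:ℤ))) n]
      rw [Finset.sum_range_succ (fun m => z ^ (m:ℤ)) (n+1)]
      have e1 : ∀ i : ℕ, z ^ (((i:ℕ)+1:ℤ) - ((n:ℤ)+1)) = z ^ ((i:ℤ) - n) := by
        intro i; congr 1; push_cast; ring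
      push_cast
      rw [Finset.sum_congr rfl (fun i _ => e1 i)]
      simp only [show ∀ i:ℕ, (i:ℤ) - (n:ℤ) = -(n:ℤ) + i from fun i => by ring]
      ring

lemma fejer_alg (N : ℕ) (z : ℂ) (hz : z ≠ 0) :
    ∑ k ∈ Finset.Icc (-(N:ℤ)) (N:ℤ), ((N:ℂ) - (k.natAbs : ℂ)) * z ^ k
      = (∑ j ∈ Finset.range N, z ^ (j:ℤ)) * ∑ j ∈ Finset.range N, z ^ (-(j:ℤ)) := by
  induction N with
  | zero => simp
  | succ n ih =>
      push_cast
      rw [sum_Icc_succ_both n (fun k => (((n:ℂ)+1) - (k.natAbs : ℂ)) * z ^ k)]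
      have hb1 : (((n:ℂ)+1) - (((-((n:ℤ)+1)).natAbs : ℕ) : ℂ)) = 0 := by
        rw [show (-((n:ℤ)+1)).natAbs = n+1 by omega]; push_cast; ring
      have hb2 : (((n:ℂ)+1) - (((((n:ℤ)+1)).natAbs : ℕ) : ℂ)) = 0 := by
        rw [show (((n:ℤ)+1)).natAbs = n+1 by omega]; push_cast; ring
      simp only [hb1, hb2, zero_mul, add_zero, zero_add]
      have split : ∀ k ∈ Finset.Icc (-(n:ℤ)) (n:ℤ),
          (((n:ℂ)+1) - (k.natAbs : ℂ)) * z ^ k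
            = ((n:ℂ) - (k.natAbs : ℂ)) * z ^ k + z ^ k := by
        intro k _; push_cast; ring
      rw [Finset.sum_congr rfl split, Finset.sum_add_distrib, ih,
        icc_zpow_sum n z hz]
      rw [Finset.sum_range_succ (fun j => z ^ (j:ℤ)) n,
        Finset.sum_range_succ (fun j => z ^ (-(j:ℤ))) n]
      have hzz : z ^ ((n:ℕ):ℤ) * z ^ (-((n:ℕ):ℤ)) = 1 := by
        rw [← zpow_add₀ hz]; simp
      have hDm : (∑ j ∈ Finset.range n, z ^ (j:ℤ)) * z ^ (-((n:ℕ):ℤ))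
          = ∑ i ∈ Finset.range n, z ^ ((i:ℤ) - n) := by
        rw [Finset.sum_mul]
        exact Finset.sum_congr rfl fun i _ => by rw [← zpow_add₀ hz, sub_eq_add_neg]
      have hmD : z ^ ((n:ℕ):ℤ) * (∑ j ∈ Finset.range n, z ^ (-(j:ℤ)))
          = ∑ j ∈ Finset.range n, z ^ ((n:ℤ) - j) := by
        rw [Finset.mul_sum]
        exact Finset.sum_congr rfl fun i _ => by rw [← zpow_add₀ hz, sub_eq_add_neg]
      have hrefl : ∑ j ∈ Finset.range n, z ^ ((n:ℤ) - j)
          = ∑ m ∈ Finset.range n, z ^ ((m:ℤ)+1) := by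
        rw [← Finset.sum_range_reflect (fun m => z ^ ((m:ℤ)+1)) n]
        refine Finset.sum_congr rfl fun j hj => ?_
        congr 1
        have hj' : j < n := Finset.mem_range.mp hj
        omega
      have h2 : ∑ x ∈ Finset.range n, z ^ (x:ℤ) + z ^ ((n:ℕ):ℤ)
          = ∑ m ∈ Finset.range n, z ^ ((m:ℤ)+1) + 1 := by
        rw [← Finset.sum_range_succ (fun j => z ^ (j:ℤ)) n,
          Finset.sum_range_succ' (fun m => z ^ (m:ℤ)) n]
        simp only [Nat.cast_add, Nat.cast_one, Nat.cast_zero, zpow_zero]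
      rw [add_mul, mul_add, mul_add, hzz, hDm, hmD, hrefl, h2]
      ring

noncomputable def fD (N : ℕ) (t : ℝ) : ℂ :=
  ∑ j ∈ Finset.range N, Complex.exp (-(Complex.I * t)) ^ j

noncomputable def fK (N : ℕ) (t : ℝ) : ℝ := (N:ℝ)⁻¹ * Complex.normSq (fD N t)

lemma fK_nonneg (N : ℕ) (t : ℝ) : 0 ≤ fK N t :=
  mul_nonneg (inv_nonneg.mpr (Nat.cast_nonneg N)) (Complex.normSq_nonneg _)

lemma fK_continuous (N : ℕ) : Continuous (fK N) := by
  apply continuous_const.mul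
  exact Complex.continuous_normSq.comp
    (continuous_finset_sum _ fun j _ => ((Complex.continuous_exp.comp (by fun_prop)).pow j))

lemma conj_z (t : ℝ) :
    (starRingEnd ℂ) (Complex.exp (-(Complex.I * t))) = Complex.exp (Complex.I * t) := by
  rw [← Complex.exp_conj]
  congr 1
  simp [Complex.conj_I]

lemma z_mul_conj (t : ℝ) :
    Complex.exp (-(Complex.I * t)) * Complex.exp (Complex.I * t) = 1 := by
  rw [← Complex.exp_add]; simp

lemma fD_conj (N : ℕ) (t : ℝ) :
    (starRingEnd ℂ) (fD N t) = ∑ j ∈ Finset.range N, Complex.exp (Complex.I * t) ^ j := by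
  rw [fD, map_sum]
  exact Finset.sum_congr rfl fun j _ => by rw [map_pow, conj_z]

lemma fK_symm (N : ℕ) (t : ℝ) : fK N (2 * Real.pi - t) = fK N t := by
  have hz : Complex.exp (-(Complex.I * ((2 * Real.pi - t : ℝ) : ℂ)))
      = Complex.exp (Complex.I * t) := by
    have h1 : (-(Complex.I * ((2 * Real.pi - t : ℝ) : ℂ)))
        = ((-1 : ℤ) : ℂ) * (2 * Real.pi * Complex.I) + Complex.I * t := by
      push_cast; ring
    rw [h1, Complex.exp_add, Complex.exp_int_mul_two_pi_mul_I, one_mul]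
  rw [fK, fK]
  congr 1
  rw [← Complex.normSq_conj (fD N t), fD_conj]
  unfold fD
  rw [hz]

lemma fejer_kernel_eq (N : ℕ) (hN : N ≠ 0) (t : ℝ) :
    ∑ k ∈ Finset.Icc (-(N:ℤ)) (N:ℤ),
        (((1 - (k.natAbs : ℝ) / (N : ℝ)) : ℝ) : ℂ) * Complex.exp (-(Complex.I * k * t))
      = ((fK N t : ℝ) : ℂ) := by
  have hfa := fejer_alg N (Complex.exp (-(Complex.I * (t:ℝ)))) (Complex.exp_ne_zero _)
  set z : ℂ := Complex.exp (-(Complex.I * t)) with hzdef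
  have hz : z ≠ 0 := Complex.exp_ne_zero _
  have hNz : ((N:ℂ)) ≠ 0 := Nat.cast_ne_zero.mpr hN
  have step1 : ∀ k : ℤ, Complex.exp (-(Complex.I * k * t)) = z ^ k := by
    intro k
    rw [hzdef, ← Complex.exp_int_mul]
    congr 1; push_cast; ring
  have step2 : ∀ k : ℤ, (((1 - (k.natAbs : ℝ) / (N : ℝ)) : ℝ) : ℂ)
      = (N:ℂ)⁻¹ * ((N:ℂ) - (k.natAbs : ℂ)) := by
    intro k; push_cast; field_simp
  calc ∑ k ∈ Finset.Icc (-(N:ℤ)) (N:ℤ),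
        (((1 - (k.natAbs : ℝ) / (N : ℝ)) : ℝ) : ℂ) * Complex.exp (-(Complex.I * k * t))
      = ∑ k ∈ Finset.Icc (-(N:ℤ)) (N:ℤ),
          (N:ℂ)⁻¹ * (((N:ℂ) - (k.natAbs : ℂ)) * z ^ k) := by
        exact Finset.sum_congr rfl fun k _ => by rw [step1 k, step2 k]; ring
    _ = (N:ℂ)⁻¹ * ∑ k ∈ Finset.Icc (-(N:ℤ)) (N:ℤ), ((N:ℂ) - (k.natAbs : ℂ)) * z ^ k := by
        rw [Finset.mul_sum]
    _ = (N:ℂ)⁻¹ * ((∑ j ∈ Finset.range N, z ^ (j:ℤ)) * ∑ j ∈ Finset.range N, z ^ (-(j:ℤ))) := by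
        rw [hfa]
    _ = ((fK N t : ℝ) : ℂ) := by
        have hD : (∑ j ∈ Finset.range N, z ^ (j:ℤ)) = fD N t := by
          rw [fD]; exact Finset.sum_congr rfl fun j _ => zpow_natCast z j
        have hD' : (∑ j ∈ Finset.range N, z ^ (-(j:ℤ))) = (starRingEnd ℂ) (fD N t) := by
          rw [fD, map_sum]
          refine Finset.sum_congr rfl fun j _ => ?_
          rw [map_pow, conj_z]
          rw [zpow_neg, zpow_natCast, ← inv_pow]
          congr 1
          rw [inv_eq_of_mul_eq_one_right (z_mul_conj t)]
        rw [hD, hD', Complex.mul_conj, fK]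
        push_cast
        ring

-- the elementary exponential integral
lemma exp_int_integral (k : ℤ) (hk : k ≠ 0) :
    ∫ t in (0:ℝ)..(2 * Real.pi), Complex.exp (-(Complex.I * k * t)) = 0 := by
  have h1 : ∀ t : ℝ, -(Complex.I * k * t) = (-(Complex.I * k)) * t := fun t => by ring
  simp only [h1]
  rw [integral_exp_mul_complex (by simp [Complex.I_ne_zero, hk])]
  have h2 : (-(Complex.I * k)) * ((2 * Real.pi : ℝ) : ℂ) = ((-k : ℤ) : ℂ) * (2 * Real.pi * Complex.I) := by
    push_cast; ring
  rw [h2, Complex.exp_int_mul_two_pi_mul_I]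
  simp

lemma fK_mass (N : ℕ) (hN : N ≠ 0) :
    ∫ t in (0:ℝ)..(2 * Real.pi), fK N t = 2 * Real.pi := by
  have key : ∫ t in (0:ℝ)..(2 * Real.pi), ((fK N t : ℝ) : ℂ) = ((2 * Real.pi : ℝ) : ℂ) := by
    have h1 : ∀ t ∈ Set.uIcc (0:ℝ) (2 * Real.pi), ((fK N t : ℝ) : ℂ)
        = ∑ k ∈ Finset.Icc (-(N:ℤ)) (N:ℤ),
            (((1 - (k.natAbs : ℝ) / (N : ℝ)) : ℝ) : ℂ) * Complex.exp (-(Complex.I * k * t)) :=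
      fun t _ => (fejer_kernel_eq N hN t).symm
    rw [intervalIntegral.integral_congr h1,
      intervalIntegral.integral_finset_sum (fun k _ => by
        apply Continuous.intervalIntegrable
        exact continuous_const.mul (Complex.continuous_exp.comp (by fun_prop)))]
    rw [Finset.sum_eq_single (0 : ℤ)]
    · simp only [Int.natAbs_zero, Nat.cast_zero, zero_div, sub_zero, Complex.ofReal_one,
        Int.cast_zero, mul_zero, zero_mul, neg_zero, Complex.exp_zero, one_mul]
      simp
    · intro k _ hk
      rw [intervalIntegral.integral_const_mul, exp_int_integral k hk, mul_zero]
    · intro h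
      exact absurd (Finset.mem_Icc.mpr (by omega)) h
  rw [intervalIntegral.integral_ofReal] at key
  exact_mod_cast key

lemma normSq_one_sub_exp (t : ℝ) :
    Complex.normSq (1 - Complex.exp (-(Complex.I * t))) = 2 - 2 * Real.cos t := by
  have h : Complex.exp (-(Complex.I * t)) = Complex.exp (((-t : ℝ) : ℂ) * Complex.I) := by
    congr 1; push_cast; ring
  rw [h, Complex.normSq_apply]
  simp only [Complex.sub_re, Complex.sub_im, Complex.one_re, Complex.one_im,
    Complex.exp_ofReal_mul_I_re, Complex.exp_ofReal_mul_I_im]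
  rw [Real.cos_neg, Real.sin_neg]
  nlinarith [Real.sin_sq_add_cos_sq t]

lemma fK_decay (N : ℕ) (t : ℝ) {c : ℝ} (hc : 0 < c) (h : c ≤ 2 - 2 * Real.cos t) :
    fK N t ≤ (N:ℝ)⁻¹ * (4 / c) := by
  set z : ℂ := Complex.exp (-(Complex.I * t)) with hzdef
  have habs : ‖z‖ = 1 := by
    rw [hzdef, Complex.norm_exp]
    norm_num [Complex.mul_re]
  have hns : Complex.normSq (1 - z) = 2 - 2 * Real.cos t := by
    rw [hzdef]; exact normSq_one_sub_exp t
  have hz1 : z ≠ 1 := by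
    intro hz1
    rw [hz1] at hns
    simp at hns
    nlinarith
  have hgeom : fD N t = (z ^ N - 1) / (z - 1) := by
    rw [fD, ← hzdef]; exact geom_sum_eq hz1 N
  have hnum : Complex.normSq (z ^ N - 1) ≤ 4 := by
    rw [Complex.normSq_eq_norm_sq]
    have h1 : ‖z ^ N - 1‖ ≤ 2 := by
      calc ‖z ^ N - 1‖ ≤ ‖z ^ N‖ + ‖(1:ℂ)‖ := norm_sub_le _ _
        _ = 2 := by rw [norm_pow, habs]; norm_num
    nlinarith [norm_nonneg (z ^ N - 1)]
  have hden : c ≤ Complex.normSq (z - 1) := by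
    rw [show z - 1 = -(1 - z) by ring, Complex.normSq_neg, hns]
    exact h
  have hfD : Complex.normSq (fD N t) ≤ 4 / c := by
    rw [hgeom, map_div₀]
    exact div_le_div₀ (by norm_num) hnum hc hden
  rw [fK]
  exact mul_le_mul_of_nonneg_left hfD (inv_nonneg.mpr (Nat.cast_nonneg N))

lemma fK_half (N : ℕ) (hN : N ≠ 0) :
    ∫ t in (0:ℝ)..Real.pi, fK N t = Real.pi := by
  have hpi : (0:ℝ) < Real.pi := Real.pi_pos
  have hsymm : ∫ t in Real.pi..(2*Real.pi), fK N t = ∫ t in (0:ℝ)..Real.pi, fK N t := by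
    have h1 : ∫ t in (0:ℝ)..Real.pi, fK N (2*Real.pi - t)
        = ∫ t in (2*Real.pi - Real.pi)..(2*Real.pi - 0), fK N t :=
      intervalIntegral.integral_comp_sub_left (fK N) (2*Real.pi)
    have h2 : ∫ t in (0:ℝ)..Real.pi, fK N (2*Real.pi - t) = ∫ t in (0:ℝ)..Real.pi, fK N t :=
      intervalIntegral.integral_congr fun t _ => fK_symm N t
    rw [h2, show 2*Real.pi - Real.pi = Real.pi by ring, sub_zero] at h1
    exact h1.symm
  have hsplit : (∫ t in (0:ℝ)..Real.pi, fK N t) + ∫ t in Real.pi..(2*Real.pi), fK N t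
      = ∫ t in (0:ℝ)..(2*Real.pi), fK N t :=
    intervalIntegral.integral_add_adjacent_intervals
      ((fK_continuous N).intervalIntegrable _ _) ((fK_continuous N).intervalIntegrable _ _)
  rw [hsymm, fK_mass N hN] at hsplit
  linarith

end FejerAux

/-- average of a function continuous (within `Ici 0`) at `c` tends to `f c`. -/
lemma avg_tendsto [CompleteSpace X] {f : ℝ → X} {c : ℝ} (hc : 0 ≤ c)
    (hcont : ContinuousOn f (Set.Ici 0)) :
    Filter.Tendsto (fun h : ℝ => h⁻¹ • ∫ u in c..(c+h), f u) (nhdsWithin 0 (Set.Ioi 0))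
      (nhds (f c)) := by
  have hint : ∀ a b : ℝ, 0 ≤ a → 0 ≤ b → IntervalIntegrable f volume a b := by
    intro a b ha hb
    apply ContinuousOn.intervalIntegrable
    apply hcont.mono
    intro t ht
    exact le_trans (le_min ha hb) ht.1
  rw [Metric.tendsto_nhdsWithin_nhds]
  intro ε hε
  have hcw : ContinuousWithinAt f (Set.Ici 0) c := hcont c hc
  rw [Metric.continuousWithinAt_iff] at hcw
  obtain ⟨δ, hδ, hδ'⟩ := hcw (ε/2) (by linarith)
  refine ⟨δ, hδ, ?_⟩
  intro h hh hdist
  have h0 : 0 < h := hh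
  have hch : 0 ≤ c + h := by linarith
  have hsub : ∫ u in c..(c+h), f u = (∫ u in c..(c+h), (f u - f c)) + h • f c := by
    rw [intervalIntegral.integral_sub (hint c (c+h) hc hch) intervalIntegrable_const,
      intervalIntegral.integral_const]
    simp only [add_sub_cancel_left]
    abel
  have hbound : ‖∫ u in c..(c+h), (f u - f c)‖ ≤ (ε/2) * |c + h - c| := by
    apply intervalIntegral.norm_integral_le_of_norm_le_const
    intro u hu
    rw [Set.uIoc_of_le (by linarith : c ≤ c + h)] at hu
    have hu0 : u ∈ Set.Ici (0:ℝ) := le_trans hc hu.1.le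
    have : dist u c < δ := by
      rw [Real.dist_eq, abs_lt]
      rw [Real.dist_eq, abs_lt] at hdist
      constructor <;> [linarith [hu.1]; linarith [hu.2, hdist.1, hdist.2]]
    have := hδ' hu0 this
    rw [dist_eq_norm] at this
    exact this.le
  rw [dist_eq_norm, hsub, smul_add, smul_smul, inv_mul_cancel₀ (ne_of_gt h0), one_smul,
    add_sub_cancel_right]
  rw [norm_smul, Real.norm_eq_abs, abs_inv, abs_of_pos h0]
  calc h⁻¹ * ‖∫ u in c..(c+h), (f u - f c)‖ ≤ h⁻¹ * ((ε/2) * h) := by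
        apply mul_le_mul_of_nonneg_left _ (inv_nonneg.mpr h0.le)
        simpa [abs_of_pos h0] using hbound
    _ = ε/2 := by field_simp
    _ < ε := by linarith

lemma exp_slope (lam : ℂ) :
    Filter.Tendsto (fun h : ℝ => h⁻¹ • (Complex.exp (lam * h) - 1)) (nhdsWithin 0 (Set.Ioi 0))
      (nhds lam) := by
  have hd : HasDerivAt (fun h : ℝ => Complex.exp (lam * h)) lam 0 := by
    have h1 : HasDerivAt (fun z : ℂ => Complex.exp (lam * z)) lam 0 := by
      have := ((hasDerivAt_id (0:ℂ)).const_mul lam).cexp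
      simpa using this
    simpa using h1.comp_ofReal
  have := hasDerivAt_iff_tendsto_slope.mp hd
  have h2 : Filter.Tendsto (slope (fun h : ℝ => Complex.exp (lam * h)) 0)
      (nhdsWithin 0 (Set.Ioi 0)) (nhds lam) :=
    this.mono_left (nhdsWithin_mono 0 (fun t ht => ne_of_gt ht))
  refine h2.congr fun h => ?_
  rw [slope_def_module]
  norm_num

lemma key_identity [CompleteSpace X]
    (S : C0Semigroup X) (A : X →ₗ.[ℂ] X) (hGen : S.IsGenerator A)
    (lam : ℂ) (Rl : X →L[ℂ] X) (hres : IsResolventAt A lam Rl)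
    (hper : Complex.exp (-(lam * ((2 * Real.pi : ℝ) : ℂ))) = 1)
    (x : X) :
    Rl (x - S.T (2 * Real.pi) x)
      = ∫ t in (0:ℝ)..(2 * Real.pi), Complex.exp (-(lam * (t : ℂ))) • S.T t x := by
  set g : ℝ → X := fun t => S.T t x with hg
  have hgc : ContinuousOn g (Set.Ici 0) := S.T_cont x
  set f : ℝ → X := fun u => Complex.exp (-(lam * (u : ℂ))) • g u with hf
  have hfc : ContinuousOn f (Set.Ici 0) := by
    apply ContinuousOn.smul _ hgc
    exact (Complex.continuous_exp.comp (by fun_prop)).continuousOn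
  have hfint : ∀ a b : ℝ, 0 ≤ a → 0 ≤ b → IntervalIntegrable f volume a b := by
    intro a b ha hb
    exact (hfc.mono (fun t ht => le_trans (le_min ha hb) ht.1)).intervalIntegrable
  set y : X := ∫ t in (0:ℝ)..(2*Real.pi), f t with hy
  have hpi : (0:ℝ) ≤ 2 * Real.pi := by positivity
  have Hlim : Filter.Tendsto (fun h : ℝ => h⁻¹ • (S.T h y - y)) (nhdsWithin 0 (Set.Ioi 0))
      (nhds (lam • y - (x - S.T (2*Real.pi) x))) := by
    have heq : ∀ h ∈ Set.Ioo (0:ℝ) 1,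
        Complex.exp (lam * h) • (h⁻¹ • ∫ u in (2*Real.pi)..(2*Real.pi+h), f u)
            - Complex.exp (lam * h) • (h⁻¹ • ∫ u in (0:ℝ)..h, f u)
            + (h⁻¹ • ((Complex.exp (lam * h) - 1) • y))
          = h⁻¹ • (S.T h y - y) := by
      intro h hh
      have h0 : (0:ℝ) < h := hh.1
      have hTy : S.T h y = Complex.exp (lam * h) • ∫ u in h..(2*Real.pi+h), f u := by
        rw [hy, ← ContinuousLinearMap.intervalIntegral_comp_comm (S.T h)
          (hfint 0 (2*Real.pi) le_rfl hpi)]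
        have hcong : ∀ t ∈ Set.uIcc (0:ℝ) (2*Real.pi),
            S.T h (f t) = Complex.exp (lam * h) • f (t + h) := by
          intro t ht
          rw [Set.uIcc_of_le hpi] at ht
          have ht0 : (0:ℝ) ≤ t := ht.1
          rw [hf]
          simp only
          rw [(S.T h).map_smul]
          have hsemi : S.T h (g t) = g (t + h) := by
            rw [hg]
            simp only
            rw [add_comm t h, S.T_add h t h0.le ht0]
            rfl
          rw [hsemi, smul_smul, ← Complex.exp_add,
            show lam * (h:ℂ) + -(lam * ((t+h:ℝ):ℂ)) = -(lam * (t:ℂ)) by push_cast; ring]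
        rw [intervalIntegral.integral_congr hcong, intervalIntegral.integral_smul]
        congr 1
        rw [intervalIntegral.integral_comp_add_right f h]
        norm_num
      have hsplit1 : ∫ u in h..(2*Real.pi+h), f u
          = (∫ u in h..(2*Real.pi), f u) + ∫ u in (2*Real.pi)..(2*Real.pi+h), f u :=
        (intervalIntegral.integral_add_adjacent_intervals (hfint h (2*Real.pi) h0.le hpi)
          (hfint (2*Real.pi) (2*Real.pi+h) hpi (by linarith))).symm
      have hsplit2 : y = (∫ u in (0:ℝ)..h, f u) + ∫ u in h..(2*Real.pi), f u := by
        rw [hy]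
        exact (intervalIntegral.integral_add_adjacent_intervals (hfint 0 h le_rfl h0.le)
          (hfint h (2*Real.pi) h0.le hpi)).symm
      rw [hTy, hsplit1, hsplit2]
      module
    have c1 : Filter.Tendsto (fun h : ℝ => Complex.exp (lam * h)) (nhdsWithin 0 (Set.Ioi 0))
        (nhds 1) := by
      have hcont : Continuous fun h : ℝ => Complex.exp (lam * h) := by fun_prop
      have h2 : Filter.Tendsto (fun h : ℝ => Complex.exp (lam * h)) (nhdsWithin 0 (Set.Ioi 0))
          (nhds (Complex.exp (lam * ((0:ℝ):ℂ)))) :=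
        (hcont.tendsto 0).mono_left nhdsWithin_le_nhds
      simpa using h2
    have a2 := avg_tendsto hpi hfc
    have a0 := avg_tendsto le_rfl hfc
    have e1 : Filter.Tendsto (fun h : ℝ => h⁻¹ • ((Complex.exp (lam * h) - 1) • y))
        (nhdsWithin 0 (Set.Ioi 0)) (nhds (lam • y)) := by
      have := (exp_slope lam).smul_const y
      refine this.congr fun h => ?_
      rw [smul_assoc]
    have hf2pi : f (2*Real.pi) = S.T (2*Real.pi) x := by
      rw [hf]
      simp only
      rw [hper, one_smul]
    have hf0 : f 0 = x := by
      rw [hf]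
      simp only [Complex.ofReal_zero, mul_zero, neg_zero, Complex.exp_zero, one_smul]
      rw [hg]
      simp only
      rw [S.T_zero]
      rfl
    have a0' := a0.congr (fun h => by rw [zero_add])
    have comb := ((c1.smul a2).sub (c1.smul a0')).add e1
    rw [hf2pi, hf0, one_smul, one_smul] at comb
    rw [show lam • y - (x - S.T (2*Real.pi) x) = S.T (2*Real.pi) x - x + lam • y by abel]
    refine Filter.Tendsto.congr' ?_ comb
    filter_upwards [Ioo_mem_nhdsGT_of_mem (Set.mem_Ico.mpr ⟨le_rfl, zero_lt_one⟩)] with h hh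
    exact heq h hh
  have hdom : y ∈ A.domain := (hGen.1 y).mpr ⟨_, Hlim⟩
  have hval : A ⟨y, hdom⟩ = lam • y - (x - S.T (2*Real.pi) x) :=
    tendsto_nhds_unique (hGen.2 ⟨y, hdom⟩) Hlim
  have hfinal := hres.2 ⟨y, hdom⟩
  rw [hval] at hfinal
  simp only [sub_sub_cancel] at hfinal
  exact hfinal

lemma cesaro_limit [CompleteSpace X] (S : C0Semigroup X) (x : X) (a : ℤ → X)
    (ha : ∀ k : ℤ, a k = (2 * Real.pi)⁻¹ •
        ∫ t in (0:ℝ)..(2 * Real.pi), Complex.exp (-(Complex.I * (k:ℂ) * (t:ℂ))) • S.T t x) :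
    HasCesaroSum a ((2⁻¹ : ℝ) • (x + S.T (2 * Real.pi) x)) := by
  have hpi : (0:ℝ) < Real.pi := Real.pi_pos
  have h2pi : (0:ℝ) < 2 * Real.pi := by linarith
  set g : ℝ → X := fun t => S.T t x with hg
  have hgc : ContinuousOn g (Set.Ici 0) := S.T_cont x
  set Tx : X := S.T (2 * Real.pi) x with hTx
  set L : X := (2⁻¹ : ℝ) • (x + Tx) with hL
  -- the kernel representation of the partial Cesàro sums
  have key : ∀ N : ℕ, N ≠ 0 →
      ∑ k ∈ Finset.Icc (-(N:ℤ)) (N:ℤ), (1 - (k.natAbs : ℝ) / (N : ℝ)) • a k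
        = (2 * Real.pi)⁻¹ • ∫ t in (0:ℝ)..(2 * Real.pi), fK N t • g t := by
    intro N hN
    have hstep1 : ∑ k ∈ Finset.Icc (-(N:ℤ)) (N:ℤ), (1 - (k.natAbs : ℝ) / (N : ℝ)) • a k
        = (2 * Real.pi)⁻¹ • ∑ k ∈ Finset.Icc (-(N:ℤ)) (N:ℤ),
            (1 - (k.natAbs : ℝ) / (N : ℝ)) •
              ∫ t in (0:ℝ)..(2 * Real.pi), Complex.exp (-(Complex.I * k * t)) • g t := by
      rw [Finset.smul_sum]
      exact Finset.sum_congr rfl fun k _ => by rw [ha k, smul_comm]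
    rw [hstep1]
    congr 1
    have hstep2 : ∀ k ∈ Finset.Icc (-(N:ℤ)) (N:ℤ),
        (1 - (k.natAbs : ℝ) / (N : ℝ)) •
            ∫ t in (0:ℝ)..(2 * Real.pi), Complex.exp (-(Complex.I * k * t)) • g t
          = ∫ t in (0:ℝ)..(2 * Real.pi),
              (1 - (k.natAbs : ℝ) / (N : ℝ)) • Complex.exp (-(Complex.I * k * t)) • g t :=
      fun k _ => (intervalIntegral.integral_smul _ _).symm
    rw [Finset.sum_congr rfl hstep2,
      ← intervalIntegral.integral_finset_sum (fun k _ => ?_)]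
    · apply intervalIntegral.integral_congr
      intro t ht
      have : ∀ k : ℤ, (1 - (k.natAbs : ℝ) / (N : ℝ)) • Complex.exp (-(Complex.I * k * t)) • g t
          = ((((1 - (k.natAbs : ℝ) / (N : ℝ)) : ℝ) : ℂ) * Complex.exp (-(Complex.I * k * t))) • g t := by
        intro k
        rw [← smul_smul, Complex.coe_smul]
      simp only [this]
      rw [← Finset.sum_smul, fejer_kernel_eq N hN t, Complex.coe_smul]
    · apply ContinuousOn.intervalIntegrable
      apply ContinuousOn.smul continuousOn_const
      apply ContinuousOn.smul (Complex.continuous_exp.comp (by fun_prop)).continuousOn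
      exact hgc.mono (by rw [Set.uIcc_of_le h2pi.le]; exact fun t ht => ht.1)
  -- boundedness of g
  obtain ⟨C, hC⟩ := isCompact_Icc.exists_bound_of_continuousOn
    (hgc.mono (fun t (ht : t ∈ Set.Icc (0:ℝ) (2*Real.pi)) => ht.1))
  have hC0 : 0 ≤ C := le_trans (norm_nonneg _) (hC 0 ⟨le_rfl, h2pi.le⟩)
  set M : ℝ := C + ‖x‖ + ‖Tx‖ + 1 with hM
  have hM0 : 0 < M := by positivity
  have hboundx : ∀ t ∈ Set.Icc (0:ℝ) (2*Real.pi), ‖g t - x‖ ≤ M := by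
    intro t ht
    calc ‖g t - x‖ ≤ ‖g t‖ + ‖x‖ := norm_sub_le _ _
      _ ≤ M := by have := hC t ht; have := norm_nonneg Tx; rw [hM]; linarith
  have hboundTx : ∀ t ∈ Set.Icc (0:ℝ) (2*Real.pi), ‖g t - Tx‖ ≤ M := by
    intro t ht
    calc ‖g t - Tx‖ ≤ ‖g t‖ + ‖Tx‖ := norm_sub_le _ _
      _ ≤ M := by have := hC t ht; have := norm_nonneg x; rw [hM]; linarith
  have hx0 : g 0 = x := by rw [hg]; simp only; rw [S.T_zero]; rfl
  rw [HasCesaroSum, Metric.tendsto_atTop]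
  intro ε hε
  -- continuity at the endpoints
  obtain ⟨δ₁, hδ₁, hP1⟩ := Metric.continuousWithinAt_iff.mp (hgc 0 Set.self_mem_Ici) (ε/8) (by linarith)
  obtain ⟨δ₂, hδ₂, hP2⟩ :=
    Metric.continuousWithinAt_iff.mp (hgc (2*Real.pi) (Set.mem_Ici.mpr h2pi.le)) (ε/8) (by linarith)
  set δ : ℝ := min (min δ₁ δ₂) 1 / 2 with hδ
  have hδ0 : 0 < δ := by positivity
  have hδle1 : δ ≤ 1 := by
    rw [hδ]
    have : min (min δ₁ δ₂) 1 ≤ 1 := min_le_right _ _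
    linarith
  have hδltδ₁ : δ < δ₁ := by
    rw [hδ]
    have h1 : min (min δ₁ δ₂) 1 ≤ δ₁ := le_trans (min_le_left _ _) (min_le_left _ _)
    linarith
  have hδltδ₂ : δ < δ₂ := by
    rw [hδ]
    have h1 : min (min δ₁ δ₂) 1 ≤ δ₂ := le_trans (min_le_left _ _) (min_le_right _ _)
    linarith
  have hpi3 : (3:ℝ) < Real.pi := Real.pi_gt_three
  have hδπ : δ ≤ Real.pi := by linarith
  set c : ℝ := 2 - 2 * Real.cos δ with hcdef
  have hc : 0 < c := by
    have h1 : Real.cos δ < Real.cos 0 :=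
      Real.cos_lt_cos_of_nonneg_of_le_pi le_rfl (by linarith) hδ0
    rw [Real.cos_zero] at h1
    rw [hcdef]; linarith
  have hcos : ∀ t : ℝ, δ ≤ t → t ≤ 2*Real.pi - δ → c ≤ 2 - 2 * Real.cos t := by
    intro t h1t h2t
    have hcc : Real.cos t ≤ Real.cos δ := by
      rcases le_or_gt t Real.pi with hcase | hcase
      · exact Real.cos_le_cos_of_nonneg_of_le_pi hδ0.le hcase h1t
      · rw [← Real.cos_two_pi_sub t]
        exact Real.cos_le_cos_of_nonneg_of_le_pi hδ0.le (by linarith) (by linarith)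
    rw [hcdef]; linarith
  -- choose N₀
  obtain ⟨N₀, hN₀⟩ := exists_nat_gt ((4 / c * M) / (ε/8))
  refine ⟨max N₀ 1, fun N hN => ?_⟩
  have hN1 : 1 ≤ N := le_trans (le_max_right _ _) hN
  have hNne : N ≠ 0 := by omega
  have hNpos : (0:ℝ) < N := by exact_mod_cast Nat.pos_of_ne_zero hNne
  have hNR : ((4 / c * M) / (ε/8)) < N :=
    lt_of_lt_of_le hN₀ (by exact_mod_cast le_trans (le_max_left _ _) hN)
  set B : ℝ := (N:ℝ)⁻¹ * (4/c) * M with hBdef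
  have h4c : (0:ℝ) ≤ 4/c := div_nonneg (by norm_num) hc.le
  have hB0 : 0 ≤ B := by
    rw [hBdef]
    exact mul_nonneg (mul_nonneg (inv_nonneg.mpr hNpos.le) h4c) hM0.le
  have hBlt : B < ε/8 := by
    have h1 : 4/c*M < (N:ℝ) * (ε/8) := (div_lt_iff₀ (by linarith)).mp hNR
    have h2 : B = (4/c*M) / N := by rw [hBdef]; ring
    rw [h2]
    exact (div_lt_iff₀ hNpos).mpr (by linarith)
  -- integrability helpers
  have hKint : ∀ (v : X) (a b : ℝ), 0 ≤ a → 0 ≤ b →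
      IntervalIntegrable (fun t => fK N t • (g t - v)) volume a b := by
    intro v a b ha hb
    exact ((((fK_continuous N).continuousOn).smul (hgc.sub continuousOn_const)).mono
      (fun t ht => le_trans (le_min ha hb) ht.1)).intervalIntegrable
  have hKgint : ∀ (a b : ℝ), 0 ≤ a → 0 ≤ b →
      IntervalIntegrable (fun t => fK N t • g t) volume a b := by
    intro a b ha hb
    exact ((((fK_continuous N).continuousOn).smul hgc).mono
      (fun t ht => le_trans (le_min ha hb) ht.1)).intervalIntegrable
  have hmass_nonneg : ∀ a b : ℝ, a ≤ b → 0 ≤ ∫ t in a..b, fK N t :=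
    fun a b hab => intervalIntegral.integral_nonneg hab (fun u _ => fK_nonneg N u)
  have hmassle : ∀ a b : ℝ, 0 ≤ a → a ≤ b → b ≤ 2*Real.pi →
      (∫ t in a..b, fK N t) ≤ 2*Real.pi := by
    intro a b ha hab hb
    rw [← fK_mass N hNne]
    exact intervalIntegral.integral_mono_interval ha hab hb
      (Filter.Eventually.of_forall fun t => fK_nonneg N t)
      ((fK_continuous N).intervalIntegrable _ _)
  -- Type 1 estimate (near the endpoints)
  have hT1 : ∀ (v : X) (r : ℝ) (a b : ℝ), 0 ≤ r → 0 ≤ a → a ≤ b → b ≤ 2*Real.pi →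
      (∀ t ∈ Set.Ioc a b, ‖g t - v‖ ≤ r) →
      ‖∫ t in a..b, fK N t • (g t - v)‖ ≤ r * (2*Real.pi) := by
    intro v r a b hr ha hab hb hptw
    have h1 : ‖∫ t in a..b, fK N t • (g t - v)‖ ≤ |∫ t in a..b, fK N t * r| := by
      apply intervalIntegral.norm_integral_le_abs_of_norm_le
      · refine MeasureTheory.ae_restrict_of_forall_mem measurableSet_uIoc ?_
        intro t ht
        rw [Set.uIoc_of_le hab] at ht
        rw [norm_smul, Real.norm_eq_abs, _root_.abs_of_nonneg (fK_nonneg N t)]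
        exact mul_le_mul_of_nonneg_left (hptw t ht) (fK_nonneg N t)
      · exact ((fK_continuous N).mul continuous_const).intervalIntegrable _ _
    rw [intervalIntegral.integral_mul_const,
      _root_.abs_of_nonneg (mul_nonneg (hmass_nonneg a b hab) hr)] at h1
    calc ‖∫ t in a..b, fK N t • (g t - v)‖ ≤ (∫ t in a..b, fK N t) * r := h1
      _ ≤ (2*Real.pi) * r := mul_le_mul_of_nonneg_right (hmassle a b ha hab hb) hr
      _ = r * (2*Real.pi) := mul_comm _ _
  -- Type 2 estimate (middle)
  have hT2 : ∀ (v : X) (a b : ℝ), (∀ t ∈ Set.Icc (0:ℝ) (2*Real.pi), ‖g t - v‖ ≤ M) →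
      δ ≤ a → a ≤ b → b ≤ 2*Real.pi - δ →
      ‖∫ t in a..b, fK N t • (g t - v)‖ ≤ B * (2*Real.pi) := by
    intro v a b hbnd ha hab hb
    have h1 : ‖∫ t in a..b, fK N t • (g t - v)‖ ≤ B * |b - a| := by
      apply intervalIntegral.norm_integral_le_of_norm_le_const
      intro t ht
      rw [Set.uIoc_of_le hab] at ht
      have h1t : δ ≤ t := le_trans ha ht.1.le
      have h2t : t ≤ 2*Real.pi - δ := le_trans ht.2 hb
      rw [norm_smul, Real.norm_eq_abs, _root_.abs_of_nonneg (fK_nonneg N t)]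
      have hk := fK_decay N t hc (hcos t h1t h2t)
      have hgv := hbnd t ⟨by linarith, by linarith⟩
      calc fK N t * ‖g t - v‖ ≤ ((N:ℝ)⁻¹ * (4/c)) * M :=
            mul_le_mul hk hgv (norm_nonneg _)
              (mul_nonneg (inv_nonneg.mpr hNpos.le) h4c)
        _ = B := by rw [hBdef]
    calc ‖∫ t in a..b, fK N t • (g t - v)‖ ≤ B * |b - a| := h1
      _ ≤ B * (2*Real.pi) := by
          apply mul_le_mul_of_nonneg_left _ hB0
          rw [_root_.abs_of_nonneg (by linarith : (0:ℝ) ≤ b - a)]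
          linarith
  -- decomposition of the kernel integral
  have hdec : ∀ (v : X) (a b : ℝ), 0 ≤ a → 0 ≤ b →
      ∫ t in a..b, fK N t • g t
        = (∫ t in a..b, fK N t • (g t - v)) + (∫ t in a..b, fK N t) • v := by
    intro v a b ha hb
    have hcong : ∀ t ∈ Set.uIcc a b, fK N t • g t = fK N t • (g t - v) + fK N t • v := by
      intro t _
      rw [smul_sub]
      abel
    rw [intervalIntegral.integral_congr hcong,
      intervalIntegral.integral_add (hKint v a b ha hb)
        (show IntervalIntegrable (fun t => fK N t • v) volume a b from
          ((fK_continuous N).smul continuous_const).intervalIntegrable _ _),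
      intervalIntegral.integral_smul_const]
  have hsplitfull : ∫ t in (0:ℝ)..(2*Real.pi), fK N t • g t
      = (∫ t in (0:ℝ)..Real.pi, fK N t • g t) + ∫ t in Real.pi..(2*Real.pi), fK N t • g t :=
    (intervalIntegral.integral_add_adjacent_intervals (hKgint 0 Real.pi le_rfl hpi.le)
      (hKgint Real.pi (2*Real.pi) hpi.le h2pi.le)).symm
  have hhalf2 : ∫ t in Real.pi..(2*Real.pi), fK N t = Real.pi := by
    have hsp : (∫ t in (0:ℝ)..Real.pi, fK N t) + ∫ t in Real.pi..(2*Real.pi), fK N t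
        = ∫ t in (0:ℝ)..(2*Real.pi), fK N t :=
      intervalIntegral.integral_add_adjacent_intervals
        ((fK_continuous N).intervalIntegrable _ _) ((fK_continuous N).intervalIntegrable _ _)
    rw [fK_half N hNne, fK_mass N hNne] at hsp
    linarith
  set E1 : X := ∫ t in (0:ℝ)..Real.pi, fK N t • (g t - x) with hE1def
  set E2 : X := ∫ t in Real.pi..(2*Real.pi), fK N t • (g t - Tx) with hE2def
  have hsigma : (∑ k ∈ Finset.Icc (-(N:ℤ)) (N:ℤ), (1 - (k.natAbs : ℝ) / (N : ℝ)) • a k) - L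
      = (2*Real.pi)⁻¹ • (E1 + E2) := by
    rw [key N hNne, hsplitfull, hdec x 0 Real.pi le_rfl hpi.le,
      hdec Tx Real.pi (2*Real.pi) hpi.le h2pi.le, fK_half N hNne, hhalf2, hL, ← hE1def, ← hE2def]
    have hco : (2⁻¹:ℝ) = (2*Real.pi)⁻¹ * Real.pi := by
      field_simp
    rw [hco]
    module
  -- the estimates
  have hptw1 : ∀ t ∈ Set.Ioc (0:ℝ) δ, ‖g t - x‖ ≤ ε/8 := by
    intro t ht
    have h1 : t ∈ Set.Ici (0:ℝ) := le_of_lt ht.1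
    have h2 : dist t 0 < δ₁ := by
      rw [Real.dist_eq, sub_zero, abs_of_pos ht.1]
      linarith [ht.2]
    have := hP1 h1 h2
    rw [hx0] at this
    rw [← dist_eq_norm]
    exact this.le
  have hptw2 : ∀ t ∈ Set.Ioc (2*Real.pi - δ) (2*Real.pi), ‖g t - Tx‖ ≤ ε/8 := by
    intro t ht
    have h1 : t ∈ Set.Ici (0:ℝ) := by
      have := ht.1
      have : 2*Real.pi - δ ≥ 0 := by linarith
      simp only [Set.mem_Ici]
      linarith [ht.1]
    have h2 : dist t (2*Real.pi) < δ₂ := by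
      rw [Real.dist_eq, abs_of_nonpos (by linarith [ht.2])]
      linarith [ht.1]
    have h3 := hP2 h1 h2
    rw [← dist_eq_norm]
    exact h3.le
  have hE1bound : ‖E1‖ ≤ ε/8 * (2*Real.pi) + B * (2*Real.pi) := by
    have hsplitE1 : E1 = (∫ t in (0:ℝ)..δ, fK N t • (g t - x))
        + ∫ t in δ..Real.pi, fK N t • (g t - x) := by
      rw [hE1def]
      exact (intervalIntegral.integral_add_adjacent_intervals (hKint x 0 δ le_rfl hδ0.le)
        (hKint x δ Real.pi hδ0.le hpi.le)).symm
    rw [hsplitE1]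
    refine le_trans (norm_add_le _ _) (add_le_add ?_ ?_)
    · exact hT1 x (ε/8) 0 δ (by linarith) le_rfl hδ0.le (by linarith) hptw1
    · exact hT2 x δ Real.pi hboundx le_rfl hδπ (by linarith)
  have hE2bound : ‖E2‖ ≤ B * (2*Real.pi) + ε/8 * (2*Real.pi) := by
    have hsplitE2 : E2 = (∫ t in Real.pi..(2*Real.pi - δ), fK N t • (g t - Tx))
        + ∫ t in (2*Real.pi - δ)..(2*Real.pi), fK N t • (g t - Tx) := by
      rw [hE2def]
      exact (intervalIntegral.integral_add_adjacent_intervals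
        (hKint Tx Real.pi (2*Real.pi - δ) hpi.le (by linarith))
        (hKint Tx (2*Real.pi - δ) (2*Real.pi) (by linarith) h2pi.le)).symm
    rw [hsplitE2]
    refine le_trans (norm_add_le _ _) (add_le_add ?_ ?_)
    · exact hT2 Tx Real.pi (2*Real.pi - δ) hboundTx hδπ (by linarith) le_rfl
    · exact hT1 Tx (ε/8) (2*Real.pi - δ) (2*Real.pi) (by linarith) (by linarith)
        (by linarith) le_rfl hptw2
  rw [dist_eq_norm, hsigma, norm_smul, Real.norm_eq_abs,
    abs_of_pos (inv_pos.mpr h2pi)]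
  have hsum : ‖E1 + E2‖ ≤ (ε/8 * (2*Real.pi) + B * (2*Real.pi))
      + (B * (2*Real.pi) + ε/8 * (2*Real.pi)) :=
    le_trans (norm_add_le _ _) (add_le_add hE1bound hE2bound)
  have hfin : (2*Real.pi)⁻¹ * ((ε/8 * (2*Real.pi) + B * (2*Real.pi))
      + (B * (2*Real.pi) + ε/8 * (2*Real.pi))) = 2 * (ε/8 + B) := by
    field_simp
    ring
  calc (2*Real.pi)⁻¹ * ‖E1 + E2‖
      ≤ (2*Real.pi)⁻¹ * ((ε/8 * (2*Real.pi) + B * (2*Real.pi))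
          + (B * (2*Real.pi) + ε/8 * (2*Real.pi))) :=
        mul_le_mul_of_nonneg_left hsum (by positivity)
    _ = 2 * (ε/8 + B) := hfin
    _ < ε := by linarith

/-- from the proof of Theorem 4.1: for `iℤ ⊂ ρ(A)`,
`(1/2π) R(ik)(I - T_{2π})x = (1/2π)∫_0^{2π} e^{-ikt} T_t x dt`, and consequently
`(1/2π)(C,1)∑_{k∈ℤ} R(ik)(I - T_{2π})x = ½(I + T_{2π})x`. -/
theorem discrete_resolvent_identity_and_cesaro
    {X : Type*} [NormedAddCommGroup X] [NormedSpace ℂ X] [CompleteSpace X]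
    (S : C0Semigroup X) (A : X →ₗ.[ℂ] X) (hGen : S.IsGenerator A)
    (R : ℂ → X →L[ℂ] X)
    (hres : ∀ k : ℤ, IsResolventAt A (Complex.I * (k : ℂ)) (R (Complex.I * (k : ℂ)))) :
    (∀ (k : ℤ) (x : X),
      R (Complex.I * (k : ℂ)) (x - S.T (2 * Real.pi) x)
        = ∫ t in (0:ℝ)..(2 * Real.pi),
            Complex.exp (-(Complex.I * (k : ℂ) * (t : ℂ))) • S.T t x) ∧
    (∀ x : X,
      HasCesaroSum
        (fun k : ℤ => (2 * Real.pi)⁻¹ •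
          R (Complex.I * (k : ℂ)) (x - S.T (2 * Real.pi) x))
        ((2⁻¹ : ℝ) • (x + S.T (2 * Real.pi) x))) := by
  have part1 : ∀ (k : ℤ) (x : X),
      R (Complex.I * (k : ℂ)) (x - S.T (2 * Real.pi) x)
        = ∫ t in (0:ℝ)..(2 * Real.pi),
            Complex.exp (-(Complex.I * (k : ℂ) * (t : ℂ))) • S.T t x := by
    intro k x
    have hper : Complex.exp (-(Complex.I * (k:ℂ) * ((2 * Real.pi : ℝ) : ℂ))) = 1 := by
      rw [show -(Complex.I * (k:ℂ) * ((2 * Real.pi : ℝ) : ℂ))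
          = ((-k : ℤ) : ℂ) * (2 * Real.pi * Complex.I) by push_cast; ring]
      exact Complex.exp_int_mul_two_pi_mul_I (-k)
    exact key_identity S A hGen (Complex.I * (k:ℂ)) (R (Complex.I * (k:ℂ))) (hres k) hper x
  refine ⟨part1, fun x => ?_⟩
  apply cesaro_limit S x
  intro k
  rw [part1 k x]

end
end
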